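/- arXiv:2409.06086 — 14 statements merged into one kernel-verified Lean document; each statement's English description precedes it below -/
import Mathlib

section
/- Let k ≥ 2 be an integer. Define sequences p, q by p(-1)=1, p(0)=0, q(-1)=0, q(0)=1, and for n ≥ 1: p(n) = (n^k + (n-1)^k)·p(n-1) + b(n-1)·p(n-2), q(n) = (n^k + (n-1)^k)·q(n-1) + b(n-1)·q(n-2), where b(0)=1 and b(n) = -n^(2k) for n ≥ 1. Then p(n)/q(n) converges to ζ(k) as n → ∞. -/
open Filter Finset

theorem zeta_cf (k : ℕ) (hk : 2 ≤ k) (p q b : ℤ → ℝ)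
    (hb0 : b 0 = 1) (hb : ∀ n : ℤ, 1 ≤ n → b n = -(n : ℝ) ^ (2 * k))
    (hpm1 : p (-1) = 1) (hp0 : p 0 = 0) (hqm1 : q (-1) = 0) (hq0 : q 0 = 1)
    (hp : ∀ n : ℤ, 1 ≤ n →
      p n = ((n : ℝ) ^ k + ((n : ℝ) - 1) ^ k) * p (n - 1) + b (n - 1) * p (n - 2))
    (hq : ∀ n : ℤ, 1 ≤ n →
      q n = ((n : ℝ) ^ k + ((n : ℝ) - 1) ^ k) * q (n - 1) + b (n - 1) * q (n - 2)) :
    Tendsto (fun n : ℕ => ((p n / q n : ℝ) : ℂ)) atTop (nhds (riemannZeta k)) := by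
  have hk1 : (0:ℕ) < k := by omega
  set S : ℕ → ℝ := fun n => ∑ j ∈ range n, 1 / ((j:ℝ) + 1) ^ k with hS
  -- key induction
  have key : ∀ n : ℕ,
      (q n = ((n.factorial : ℝ)) ^ k ∧ p n = ((n.factorial : ℝ)) ^ k * S n) ∧
      (q (n+1) = (((n+1).factorial : ℝ)) ^ k ∧
        p (n+1) = (((n+1).factorial : ℝ)) ^ k * S (n+1)) := by
    intro n
    induction n with
    | zero =>
      have h1q := hq 1 le_rfl
      have h1p := hp 1 le_rfl
      norm_num at h1q h1p ⊢
      rw [zero_pow (by omega), hq0, hqm1, hb0] at h1q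
      rw [zero_pow (by omega), hp0, hpm1, hb0] at h1p
      simp [hq0, hp0, h1q, h1p, hS]
    | succ n ih =>
      refine ⟨ih.2, ?_, ?_⟩
      · have hrec := hq ((n:ℤ) + 2) (by omega)
        have hbn : b ((n:ℤ) + 1) = -(((n:ℝ)) + 1) ^ (2*k) := by
          have := hb ((n:ℤ)+1) (by omega); push_cast at this; exact this
        have e1 : ((n:ℤ) + 2 - 1) = ((n:ℕ) + 1 : ℤ) := by push_cast; ring
        have e2 : ((n:ℤ) + 2 - 2) = ((n:ℕ) : ℤ) := by push_cast; ring
        rw [e1, e2] at hrec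
        have hg : (((n+1:ℕ)):ℤ) + 1 = (n:ℤ) + 2 := by push_cast; ring
        rw [hg, hrec, ih.1.1, ih.2.1, hbn]
        have hf1 : ((n+2).factorial : ℝ) = ((n:ℝ)+2) * (((n:ℝ)+1) * (n.factorial : ℝ)) := by
          rw [Nat.factorial_succ, Nat.factorial_succ]; push_cast; ring
        have hf2 : (((n+1).factorial : ℝ)) = ((n:ℝ)+1) * (n.factorial : ℝ) := by
          rw [Nat.factorial_succ]; push_cast; ring
        rw [hf1, hf2]
        simp only [mul_pow, two_mul, pow_add]
        push_cast
        ring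
      · have hrec := hp ((n:ℤ) + 2) (by omega)
        have hbn : b ((n:ℤ) + 1) = -(((n:ℝ)) + 1) ^ (2*k) := by
          have := hb ((n:ℤ)+1) (by omega); push_cast at this; exact this
        have e1 : ((n:ℤ) + 2 - 1) = ((n:ℕ) + 1 : ℤ) := by push_cast; ring
        have e2 : ((n:ℤ) + 2 - 2) = ((n:ℕ) : ℤ) := by push_cast; ring
        rw [e1, e2] at hrec
        have hg : (((n+1:ℕ)):ℤ) + 1 = (n:ℤ) + 2 := by push_cast; ring
        rw [hg, hrec, ih.1.2, ih.2.2, hbn]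
        have hf1 : ((n+2).factorial : ℝ) = ((n:ℝ)+2) * (((n:ℝ)+1) * (n.factorial : ℝ)) := by
          rw [Nat.factorial_succ, Nat.factorial_succ]; push_cast; ring
        have hf2 : (((n+1).factorial : ℝ)) = ((n:ℝ)+1) * (n.factorial : ℝ) := by
          rw [Nat.factorial_succ]; push_cast; ring
        have hs1 : S (n+1) = S n + 1 / ((n:ℝ)+1) ^ k := by
          simp [hS, Finset.sum_range_succ]
        have hs2 : S (n+2) = S (n+1) + 1 / ((n:ℝ)+2) ^ k := by
          simp only [hS, Finset.sum_range_succ]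
          push_cast
          norm_num
          congr 1
          ring
        rw [hf1, hf2, hs2, hs1]
        simp only [mul_pow, two_mul, pow_add]
        have h1 : ((n:ℝ)+1) ^ k ≠ 0 := by positivity
        have h2' : ((n:ℝ)+2) ^ k ≠ 0 := by positivity
        push_cast
        field_simp
        ring
  -- p n / q n = S n
  have hdiv : ∀ n : ℕ, p n / q n = S n := by
    intro n
    have hfne : ((n.factorial : ℝ)) ^ k ≠ 0 := by positivity
    rw [(key n).1.1, (key n).1.2]
    field_simp
  simp only [hdiv]
  -- now convergence
  have hzeta : riemannZeta k = ∑' n : ℕ, 1 / ((n:ℂ) + 1) ^ k := by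
    rw [zeta_eq_tsum_one_div_nat_add_one_cpow (by simp; exact_mod_cast by omega : 1 < Complex.re k)]
    congr 1; ext n; rw [Complex.cpow_natCast]
  have hsum : Summable (fun n : ℕ => 1 / ((n:ℂ) + 1) ^ k) := by
    have : Summable (fun n : ℕ => 1 / ((n:ℂ)) ^ (k:ℂ)) :=
      Complex.summable_one_div_nat_cpow.mpr (by simp; exact_mod_cast by omega)
    have h2 := (summable_nat_add_iff 1).mpr this
    refine h2.congr fun n => ?_
    push_cast
    rw [Complex.cpow_natCast]
  have := hsum.hasSum.tendsto_sum_nat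
  rw [hzeta]
  refine this.congr fun n => ?_
  push_cast [hS]
  norm_num
end

section
/- Define sequences p, q by p(-1)=1, p(0)=0, q(-1)=0, q(0)=1, and for n ≥ 1: p(n) = (2n³-3n²+3n-1)·p(n-1) + b(n-1)·p(n-2), q(n) = (2n³-3n²+3n-1)·q(n-1) + b(n-1)·q(n-2), where b(0)=1 and b(n) = -n⁶ for n ≥ 1. Then p(n)/q(n) converges to ζ(3) as n → ∞. -/
open Filter

theorem zeta_three_cf (p q b : ℤ → ℝ)
    (hb0 : b 0 = 1) (hb : ∀ n : ℤ, 1 ≤ n → b n = -(n : ℝ) ^ 6)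
    (hpm1 : p (-1) = 1) (hp0 : p 0 = 0) (hqm1 : q (-1) = 0) (hq0 : q 0 = 1)
    (hp : ∀ n : ℤ, 1 ≤ n →
      p n = (2 * (n : ℝ) ^ 3 - 3 * (n : ℝ) ^ 2 + 3 * (n : ℝ) - 1) * p (n - 1)
        + b (n - 1) * p (n - 2))
    (hq : ∀ n : ℤ, 1 ≤ n →
      q n = (2 * (n : ℝ) ^ 3 - 3 * (n : ℝ) ^ 2 + 3 * (n : ℝ) - 1) * q (n - 1)
        + b (n - 1) * q (n - 2)) :
    Tendsto (fun n : ℕ => ((p n / q n : ℝ) : ℂ)) atTop (nhds (riemannZeta 3)) := by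
  set S : ℕ → ℝ := fun n => ∑ k ∈ Finset.range n, (1 : ℝ) / ((k : ℝ) + 1) ^ 3 with hS
  -- closed form for p and q
  have key : ∀ n : ℕ,
      (q n = (n.factorial : ℝ) ^ 3 ∧ p n = (n.factorial : ℝ) ^ 3 * S n) ∧
      (q ((n : ℤ) + 1) = ((n + 1).factorial : ℝ) ^ 3 ∧
        p ((n : ℤ) + 1) = ((n + 1).factorial : ℝ) ^ 3 * S (n + 1)) := by
    intro n
    induction n with
    | zero =>
      have h1q := hq 1 le_rfl
      have h1p := hp 1 le_rfl
      norm_num [hq0, hqm1, hp0, hpm1, hb0] at h1q h1p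
      refine ⟨⟨by simpa using hq0, by simp [hS, hp0]⟩, ?_, ?_⟩
      · simpa using h1q
      · simp only [Nat.cast_zero, zero_add]
        rw [h1p]
        simp [hS]
    | succ n ih =>
      refine ⟨ih.2, ?_, ?_⟩
      · have h := hq ((n : ℤ) + 2) (by omega)
        have hb' := hb ((n : ℤ) + 1) (by omega)
        have e1 : (n : ℤ) + 2 - 1 = (n : ℤ) + 1 := by ring
        have e2 : (n : ℤ) + 2 - 2 = (n : ℤ) := by ring
        rw [e1, e2, hb', ih.1.1, ih.2.1] at h
        have hcast : (((n : ℤ) + 1 : ℤ) : ℝ) = (n : ℝ) + 1 := by push_cast; ring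
        have hcast2 : (((n : ℤ) + 2 : ℤ) : ℝ) = (n : ℝ) + 2 := by push_cast; ring
        rw [hcast, hcast2] at h
        have : (((n + 1) : ℕ) : ℤ) + 1 = (n : ℤ) + 2 := by push_cast; ring
        rw [this, h]
        have hf1 : ((n + 1 + 1).factorial : ℝ) = ((n : ℝ) + 2) * ((n + 1).factorial : ℝ) := by
          rw [Nat.factorial_succ]; push_cast; ring
        have hf2 : ((n + 1).factorial : ℝ) = ((n : ℝ) + 1) * (n.factorial : ℝ) := by
          rw [Nat.factorial_succ]; push_cast; ring
        rw [hf1, hf2]; ring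
      · have h := hp ((n : ℤ) + 2) (by omega)
        have hb' := hb ((n : ℤ) + 1) (by omega)
        have e1 : (n : ℤ) + 2 - 1 = (n : ℤ) + 1 := by ring
        have e2 : (n : ℤ) + 2 - 2 = (n : ℤ) := by ring
        rw [e1, e2, hb', ih.1.2, ih.2.2] at h
        have hcast : (((n : ℤ) + 1 : ℤ) : ℝ) = (n : ℝ) + 1 := by push_cast; ring
        have hcast2 : (((n : ℤ) + 2 : ℤ) : ℝ) = (n : ℝ) + 2 := by push_cast; ring
        rw [hcast, hcast2] at h
        have : (((n + 1) : ℕ) : ℤ) + 1 = (n : ℤ) + 2 := by push_cast; ring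
        rw [this, h]
        have hf1 : ((n + 1 + 1).factorial : ℝ) = ((n : ℝ) + 2) * ((n + 1).factorial : ℝ) := by
          rw [Nat.factorial_succ]; push_cast; ring
        have hf2 : ((n + 1).factorial : ℝ) = ((n : ℝ) + 1) * (n.factorial : ℝ) := by
          rw [Nat.factorial_succ]; push_cast; ring
        have hS1 : S (n + 1) = S n + 1 / ((n : ℝ) + 1) ^ 3 := by
          simp [hS, Finset.sum_range_succ]
        have hS2 : S (n + 1 + 1) = S (n + 1) + 1 / ((n : ℝ) + 1 + 1) ^ 3 := by
          simp [hS, Finset.sum_range_succ]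
        have h1 : ((n : ℝ) + 1) ≠ 0 := by positivity
        have h2 : ((n : ℝ) + 2) ≠ 0 := by positivity
        rw [hf1, hf2, hS2, hS1]
        field_simp
        ring
  -- hence p n / q n = S n
  have hpq : ∀ n : ℕ, p n / q n = S n := by
    intro n
    obtain ⟨⟨h1, h2⟩, _⟩ := key n
    have hf : (n.factorial : ℝ) ^ 3 ≠ 0 := by positivity
    rw [h1, h2]; field_simp
  -- summability of 1/(k+1)^3
  have hsum : Summable (fun k : ℕ => (1 : ℝ) / ((k : ℝ) + 1) ^ 3) := by
    have := (summable_nat_add_iff (f := fun k : ℕ => (1 : ℝ) / (k : ℝ) ^ 3) 1).mpr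
      (Real.summable_one_div_nat_pow.mpr (by norm_num))
    simpa [add_comm] using this
  -- real limit
  have hT : Tendsto S atTop (nhds (∑' k : ℕ, (1 : ℝ) / ((k : ℝ) + 1) ^ 3)) :=
    hsum.hasSum.tendsto_sum_nat
  -- identify the limit with riemannZeta 3
  have hz : riemannZeta 3 = ((∑' k : ℕ, (1 : ℝ) / ((k : ℝ) + 1) ^ 3 : ℝ) : ℂ) := by
    have h3 : (1 : ℝ) < Complex.re 3 := by norm_num
    rw [zeta_eq_tsum_one_div_nat_add_one_cpow h3, Complex.ofReal_tsum]
    congr 1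
    funext k
    have : ((k : ℂ) + 1) ^ (3 : ℂ) = ((k : ℂ) + 1) ^ (3 : ℕ) := by
      rw [show (3 : ℂ) = ((3 : ℕ) : ℂ) by norm_num, Complex.cpow_natCast]
    rw [this]
    push_cast
    ring
  rw [hz]
  have : (fun n : ℕ => ((p n / q n : ℝ) : ℂ)) = fun n : ℕ => ((S n : ℝ) : ℂ) := by
    funext n; rw [hpq n]
  rw [this]
  exact (Complex.continuous_ofReal.tendsto _).comp hT
end

section
/- Define sequences p, q by p(-1)=1, p(0)=0, q(-1)=0, q(0)=1, and for n ≥ 1: p(n) = (2n²-2n+1)·p(n-1) + b(n-1)·p(n-2), q(n) = (2n²-2n+1)·q(n-1) + b(n-1)·q(n-2), where b(0)=6 and b(n) = -n⁴ for n ≥ 1. Then p(n)/q(n) converges to π² as n → ∞. -/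
open Filter Real

theorem pi_sq_cf (p q b : ℤ → ℝ)
    (hb0 : b 0 = 6) (hb : ∀ n : ℤ, 1 ≤ n → b n = -(n : ℝ) ^ 4)
    (hpm1 : p (-1) = 1) (hp0 : p 0 = 0) (hqm1 : q (-1) = 0) (hq0 : q 0 = 1)
    (hp : ∀ n : ℤ, 1 ≤ n →
      p n = (2 * (n : ℝ) ^ 2 - 2 * (n : ℝ) + 1) * p (n - 1) + b (n - 1) * p (n - 2))
    (hq : ∀ n : ℤ, 1 ≤ n →
      q n = (2 * (n : ℝ) ^ 2 - 2 * (n : ℝ) + 1) * q (n - 1) + b (n - 1) * q (n - 2)) :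
    Tendsto (fun n : ℕ => p n / q n) atTop (nhds (π ^ 2)) := by
  set T : ℕ → ℝ := fun n => ∑ k ∈ Finset.range (n + 1), (1 : ℝ) / (k : ℝ) ^ 2 with hT
  have key : ∀ n : ℕ, (q n = ((n.factorial : ℝ)) ^ 2 ∧ p n = 6 * (n.factorial : ℝ) ^ 2 * T n)
      ∧ (q (n + 1 : ℕ) = ((n + 1).factorial : ℝ) ^ 2 ∧
         p (n + 1 : ℕ) = 6 * ((n + 1).factorial : ℝ) ^ 2 * T (n + 1)) := by
    intro n
    induction n with
    | zero =>
      have h1 : ((1 : ℕ) : ℤ) = 1 := by norm_num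
      have hp1 := hp 1 (by norm_num)
      have hq1 := hq 1 (by norm_num)
      norm_num at hp1 hq1
      rw [hp0, hpm1, hb0] at hp1
      rw [hq0, hqm1, hb0] at hq1
      refine ⟨⟨by simpa using hq0, by simp [hp0, hT]⟩, ?_⟩
      constructor
      · rw [h1, hq1]; norm_num
      · rw [h1, hp1]; simp [hT, Finset.sum_range_succ]
    | succ n ih =>
      refine ⟨ih.2, ?_⟩
      obtain ⟨⟨hqn, hpn⟩, ⟨hqn1, hpn1⟩⟩ := ih
      have hcast : ((n + 2 : ℕ) : ℤ) = (n : ℤ) + 2 := by push_cast; ring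
      have h1 : ((n : ℤ) + 2) - 1 = ((n + 1 : ℕ) : ℤ) := by push_cast; ring
      have h2 : ((n : ℤ) + 2) - 2 = ((n : ℕ) : ℤ) := by push_cast; ring
      have hbn : b (((n : ℤ) + 2) - 1) = -((n : ℝ) + 1) ^ 4 := by
        rw [h1, hb _ (by exact_mod_cast Nat.one_le_iff_ne_zero.mpr (Nat.succ_ne_zero n))]
        push_cast; ring
      have hpN := hp ((n : ℤ) + 2) (by omega)
      have hqN := hq ((n : ℤ) + 2) (by omega)
      rw [hbn, h1, h2, hpn1, hpn] at hpN
      rw [hbn, h1, h2, hqn1, hqn] at hqN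
      have hfac1 : (((n + 1).factorial : ℝ)) = ((n : ℝ) + 1) * (n.factorial : ℝ) := by
        rw [Nat.factorial_succ]; push_cast; ring
      have hfac2 : (((n + 2).factorial : ℝ)) = ((n : ℝ) + 2) * ((n : ℝ) + 1) * (n.factorial : ℝ) := by
        rw [Nat.factorial_succ, Nat.factorial_succ]; push_cast; ring
      have hT1 : T (n + 1) = T n + 1 / ((n : ℝ) + 1) ^ 2 := by
        simp [hT, Finset.sum_range_succ]
      have hT2 : T (n + 2) = T n + 1 / ((n : ℝ) + 1) ^ 2 + 1 / ((n : ℝ) + 2) ^ 2 := by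
        simp only [hT, Finset.sum_range_succ]; push_cast; ring
      have hcN : (((n + 2 : ℕ) : ℤ) : ℝ) = (n : ℝ) + 2 := by push_cast; ring
      have hne1 : ((n : ℝ) + 1) ≠ 0 := by positivity
      have hne2 : ((n : ℝ) + 2) ≠ 0 := by positivity
      constructor
      · rw [hcast, hqN, hfac2, hfac1]
        push_cast
        ring
      · rw [hcast, hpN, hfac2, hfac1, hT1, hT2]
        push_cast
        field_simp
        ring
  have hfacne : ∀ n : ℕ, ((n.factorial : ℝ)) ^ 2 ≠ 0 := by
    intro n; positivity
  have heq : ∀ n : ℕ, p n / q n = 6 * T n := by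
    intro n
    obtain ⟨⟨hqn, hpn⟩, _⟩ := key n
    rw [hqn, hpn]
    field_simp
  have hsum : Tendsto (fun n : ℕ => T n) atTop (nhds (π ^ 2 / 6)) := by
    have := hasSum_zeta_two.tendsto_sum_nat
    exact this.comp (tendsto_add_atTop_nat 1)
  have : Tendsto (fun n : ℕ => 6 * T n) atTop (nhds (π ^ 2)) := by
    have h := hsum.const_mul (6 : ℝ)
    have h6 : (6 : ℝ) * (π ^ 2 / 6) = π ^ 2 := by ring
    rwa [h6] at h
  simpa [heq] using this
end

section
/- Define sequences p, q by p(-1)=1, p(0)=0, q(-1)=0, q(0)=1, and for n ≥ 1: p(n) = (10n-5)·p(n-1) + b(n-1)·p(n-2), q(n) = (10n-5)·q(n-1) + b(n-1)·q(n-2), where b(0)=3 and b(n) = -9n² for n ≥ 1. Then p(n)/q(n) converges to log 2 as n → ∞. -/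
open Filter Real Set intervalIntegral

noncomputable def Aint (n m : ℕ) : ℝ := ∫ t in (-1:ℝ)..1, (1 - t^2)^n / (5 - 3*t)^m

lemma uIcc_eq : Set.uIcc (-1:ℝ) 1 = Set.Icc (-1) 1 := Set.uIcc_of_le (by norm_num)

lemma den_ge {t : ℝ} (ht : t ∈ Set.Icc (-1:ℝ) 1) : (2:ℝ) ≤ 5 - 3*t := by
  obtain ⟨h1, h2⟩ := ht; nlinarith

lemma contA (n m : ℕ) : ContinuousOn (fun t : ℝ => (1 - t^2)^n / (5 - 3*t)^m)
    (Set.uIcc (-1:ℝ) 1) := by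
  apply ContinuousOn.div (by fun_prop) (by fun_prop)
  intro t ht
  rw [uIcc_eq] at ht
  have := den_ge ht
  positivity

lemma intA (n m : ℕ) : IntervalIntegrable (fun t : ℝ => (1 - t^2)^n / (5 - 3*t)^m)
    MeasureTheory.volume (-1) 1 := (contA n m).intervalIntegrable

lemma Aint_nonneg (n m : ℕ) : 0 ≤ Aint n m := by
  apply intervalIntegral.integral_nonneg (by norm_num)
  intro t ht
  have h1 := den_ge ht
  have h2 : (0:ℝ) ≤ 1 - t^2 := by obtain ⟨a,b⟩ := ht; nlinarith
  positivity

lemma Aint_le (n : ℕ) : Aint n (n+1) ≤ (2/9)^n := by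
  have h : Aint n (n+1) ≤ ∫ _ in (-1:ℝ)..1, (2/9:ℝ)^n / 2 := by
    apply intervalIntegral.integral_mono_on (by norm_num) (intA n (n+1))
      (intervalIntegrable_const)
    intro t ht
    have h1 := den_ge ht
    have h2 : (0:ℝ) ≤ 1 - t^2 := by obtain ⟨a,b⟩ := ht; nlinarith
    have key : (1 - t^2)^n / (5-3*t)^n ≤ (2/9)^n := by
      rw [div_le_iff₀ (by positivity), ← mul_pow]
      exact pow_le_pow_left₀ h2 (by nlinarith [sq_nonneg (3*t-1)]) n
    calc (1 - t^2)^n / (5 - 3*t)^(n+1)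
        = ((1 - t^2)^n / (5-3*t)^n) * (1/(5-3*t)) := by
          rw [pow_succ (5-3*t) n, div_mul_eq_div_div, div_eq_mul_one_div]
      _ ≤ (2/9)^n * (1/2) := by
          apply mul_le_mul key ?_ (by positivity) (by positivity)
          rw [div_le_div_iff₀ (by linarith) (by norm_num)]; linarith
      _ = (2/9)^n / 2 := by ring
  refine h.trans_eq ?_
  rw [intervalIntegral.integral_const]
  rw [smul_eq_mul]
  ring

lemma hd_lin (t : ℝ) : HasDerivAt (fun t : ℝ => 5 - 3*t) (-3) t := by
  simpa using ((hasDerivAt_id t).const_mul 3).const_sub 5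

lemma Aint01 : Aint 0 1 = 2/3 * Real.log 2 := by
  have key : ∀ t ∈ Set.uIcc (-1:ℝ) 1,
      HasDerivAt (fun t : ℝ => -(1/3) * Real.log (5 - 3*t)) ((1 - t^2)^0 / (5 - 3*t)^1) t := by
    intro t ht
    rw [uIcc_eq] at ht
    have h2 := den_ge ht
    have h := ((hd_lin t).log (by linarith)).const_mul (-(1/3):ℝ)
    refine h.congr_deriv (Eq.symm ?_)
    field_simp
  have := intervalIntegral.integral_eq_sub_of_hasDerivAt key (intA 0 1)
  rw [Aint, this]
  have h8 : Real.log 8 = 3 * Real.log 2 := by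
    rw [show (8:ℝ) = 2^3 by norm_num, Real.log_pow]; push_cast; ring
  norm_num [h8]
  ring

lemma Aint12 : Aint 1 2 = 20/27 * Real.log 2 - 4/9 := by
  have key : ∀ t ∈ Set.uIcc (-1:ℝ) 1,
      HasDerivAt (fun t : ℝ => -(1/9)*t - 10/27 * Real.log (5 - 3*t) - 16/27 * (5 - 3*t)⁻¹)
        ((1 - t^2)^1 / (5 - 3*t)^2) t := by
    intro t ht
    rw [uIcc_eq] at ht
    have h2 := den_ge ht
    have hne : (5 - 3*t) ≠ 0 := by linarith
    have ha : HasDerivAt (fun t : ℝ => -(1/9)*t) (-(1/9)) t := by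
      simpa using (hasDerivAt_id t).const_mul (-(1/9):ℝ)
    have hb := ((hd_lin t).log hne).const_mul (10/27:ℝ)
    have hc := ((hd_lin t).inv hne).const_mul (16/27:ℝ)
    have h := (ha.sub hb).sub hc
    refine h.congr_deriv (Eq.symm ?_)
    simp only [neg_neg]
    have hne3 : (5:ℝ) - t*3 ≠ 0 := by linarith
    field_simp
    ring
  have := intervalIntegral.integral_eq_sub_of_hasDerivAt key (intA 1 2)
  rw [Aint, this]
  have h8 : Real.log 8 = 3 * Real.log 2 := by
    rw [show (8:ℝ) = 2^3 by norm_num, Real.log_pow]; push_cast; ring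
  norm_num [h8]
  ring

lemma Arec (m : ℕ) :
    9*((m:ℝ)+2) * Aint (m+2) (m+3) =
      (20*(m:ℝ)+30) * Aint (m+1) (m+2) - (4*(m:ℝ)+4) * Aint m (m+1) := by
  set G : ℝ → ℝ := fun t =>
    9*((m:ℝ)+2) * ((1 - t^2)^(m+2) / (5 - 3*t)^(m+3))
      - (20*(m:ℝ)+30) * ((1 - t^2)^(m+1) / (5 - 3*t)^(m+2))
      + (4*(m:ℝ)+4) * ((1 - t^2)^m / (5 - 3*t)^(m+1)) with hG
  have key : ∀ t ∈ Set.uIcc (-1:ℝ) 1,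
      HasDerivAt (fun t : ℝ => (1 - t^2)^(m+1) * (3*t^2 - 10*t + 3) / (5 - 3*t)^(m+2))
        (G t) t := by
    intro t ht
    rw [uIcc_eq] at ht
    have h2 := den_ge ht
    have hne : (5 - 3*t) ≠ 0 := by linarith
    have hne' : (5 - 3*t)^(m+2) ≠ 0 := pow_ne_zero _ hne
    have hX := ((hasDerivAt_pow 2 t).const_sub 1).pow (m+1)
    have ha := (((hasDerivAt_pow 2 t).const_mul 3).sub ((hasDerivAt_id t).const_mul 10)).add_const (3:ℝ)
    have hU := (hd_lin t).pow (m+2)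
    have h := (hX.mul ha).div hU (pow_ne_zero _ hne)
    refine h.congr_deriv (Eq.symm ?_)
    rw [hG]
    simp only [Nat.add_sub_cancel, id_eq, pow_one, Pi.pow_apply, Pi.mul_apply, Pi.sub_apply]
    push_cast
    have hne3 : (5:ℝ) - t*3 ≠ 0 := by linarith
    field_simp
    ring
  have hInt : IntervalIntegrable G MeasureTheory.volume (-1) 1 :=
    (((intA (m+2) (m+3)).const_mul _).sub ((intA (m+1) (m+2)).const_mul _)).add
      ((intA m (m+1)).const_mul _)
  have hFTC := intervalIntegral.integral_eq_sub_of_hasDerivAt key hInt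
  have hzero : (∫ t in (-1:ℝ)..1, G t) = 0 := by
    rw [hFTC]; norm_num
  rw [hG] at hzero
  rw [intervalIntegral.integral_add (((intA (m+2) (m+3)).const_mul _).sub
        ((intA (m+1) (m+2)).const_mul _)) ((intA m (m+1)).const_mul _),
      intervalIntegral.integral_sub ((intA (m+2) (m+3)).const_mul _)
        ((intA (m+1) (m+2)).const_mul _),
      intervalIntegral.integral_const_mul, intervalIntegral.integral_const_mul,
      intervalIntegral.integral_const_mul] at hzero
  show _ = _
  rw [Aint, Aint, Aint]
  linarith [hzero]

noncomputable def Eerr (n : ℕ) : ℝ := (n.factorial : ℝ) * 3^(2*n+1) / 2^(n+1) * Aint n (n+1)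

lemma Eerr0 : Eerr 0 = Real.log 2 := by
  rw [Eerr, Aint01]; norm_num [Nat.factorial]; ring

lemma Eerr1 : Eerr 1 = 5 * Real.log 2 - 3 := by
  rw [Eerr, Aint12]; norm_num; ring

lemma Eerr_nonneg (n : ℕ) : 0 ≤ Eerr n := by
  rw [Eerr]
  have := Aint_nonneg n (n+1)
  positivity

lemma Eerr_le (n : ℕ) : Eerr n ≤ 3/2 * (n.factorial : ℝ) := by
  rw [Eerr]
  have h := Aint_le n
  have h2 : (0:ℝ) < (n.factorial : ℝ) * 3^(2*n+1) / 2^(n+1) := by positivity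
  calc (n.factorial : ℝ) * 3^(2*n+1) / 2^(n+1) * Aint n (n+1)
      ≤ (n.factorial : ℝ) * 3^(2*n+1) / 2^(n+1) * (2/9)^n := by
        exact mul_le_mul_of_nonneg_left h (le_of_lt h2)
    _ = (n.factorial : ℝ) * ((2/9)^n * 3^(2*n+1)) / 2^(n+1) := by ring
    _ = 3/2 * (n.factorial : ℝ) := by
        rw [div_pow, show (9:ℝ)^n = 3^(2*n) by rw [pow_mul]; norm_num]
        rw [pow_succ, pow_succ, pow_mul]
        field_simp

lemma Eerr_rec (n : ℕ) : Eerr (n+2) =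
    (10*((n:ℝ)+2) - 5) * Eerr (n+1) - 9*((n:ℝ)+1)^2 * Eerr n := by
  have h := Arec n
  rw [Eerr, Eerr, Eerr]
  rw [Nat.factorial_succ, Nat.factorial_succ]
  push_cast
  linear_combination (((n:ℝ)+1)*(n.factorial:ℝ)*3^(2*n+3)/2^(n+3)) * h

theorem log_two_cf (p q b : ℤ → ℝ)
    (hb0 : b 0 = 3) (hb : ∀ n : ℤ, 1 ≤ n → b n = -9 * (n : ℝ) ^ 2)
    (hpm1 : p (-1) = 1) (hp0 : p 0 = 0) (hqm1 : q (-1) = 0) (hq0 : q 0 = 1)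
    (hp : ∀ n : ℤ, 1 ≤ n →
      p n = (10 * (n : ℝ) - 5) * p (n - 1) + b (n - 1) * p (n - 2))
    (hq : ∀ n : ℤ, 1 ≤ n →
      q n = (10 * (n : ℝ) - 5) * q (n - 1) + b (n - 1) * q (n - 2)) :
    Tendsto (fun n : ℕ => p n / q n) atTop (nhds (Real.log 2)) := by
  have hq1 : q 1 = 5 := by
    have h := hq 1 le_rfl
    norm_num at h
    rw [hq0, hqm1, hb0] at h
    linarith
  have hp1 : p 1 = 3 := by
    have h := hp 1 le_rfl
    norm_num at h
    rw [hp0, hpm1, hb0] at h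
    linarith
  -- key identity
  have key : ∀ n : ℕ, q n * Real.log 2 - p n = Eerr n := by
    intro n
    induction n using Nat.twoStepInduction with
    | zero => simp [hq0, hp0, Eerr0]
    | one => simp only [Nat.cast_one, hq1, hp1, Eerr1]
    | more n ih1 ih2 =>
      have hp2 := hp ((n:ℤ)+2) (by omega)
      have hq2 := hq ((n:ℤ)+2) (by omega)
      have hbn := hb ((n:ℤ)+1) (by omega)
      rw [show ((n:ℤ)+2)-1 = (n:ℤ)+1 from by ring,
          show ((n:ℤ)+2)-2 = (n:ℤ) from by ring, hbn] at hp2 hq2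
      push_cast at hp2 hq2 ih2 ⊢
      rw [Eerr_rec n]
      push_cast at ih1
      linear_combination Real.log 2 * hq2 - hp2 + (10*((n:ℝ)+2)-5) * ih2
        - (9*((n:ℝ)+1)^2) * ih1
  -- positivity and growth of q
  have S : ∀ n : ℕ, 0 < q n ∧ 4*((n:ℝ)+1)*q n ≤ q (n+1) := by
    intro n
    induction n with
    | zero => constructor <;> simp [hq0, hq1] <;> norm_num
    | succ n ih =>
      obtain ⟨hpos, hstep⟩ := ih
      have hq1pos : 0 < q (n+1) := by
        have h4 : (0:ℝ) < 4*((n:ℝ)+1)*q n := by positivity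
        calc (0:ℝ) < 4*((n:ℝ)+1)*q n := h4
          _ ≤ q (n+1) := hstep
      refine ⟨hq1pos, ?_⟩
      have hq2 := hq ((n:ℤ)+2) (by omega)
      have hbn := hb ((n:ℤ)+1) (by omega)
      rw [show ((n:ℤ)+2)-1 = (n:ℤ)+1 from by ring,
          show ((n:ℤ)+2)-2 = (n:ℤ) from by ring, hbn] at hq2
      push_cast at hq2 ⊢
      rw [show ((n:ℤ)+1+1) = (n:ℤ)+2 from by ring]
      nlinarith [mul_le_mul_of_nonneg_left hstep
        (show (0:ℝ) ≤ 9*((n:ℝ)+1)/4 by positivity), hq2, hpos, hq1pos]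
  have qfact : ∀ n : ℕ, (4:ℝ)^n * n.factorial ≤ q n := by
    intro n
    induction n with
    | zero => simp [hq0]
    | succ n ih =>
      have h1 := (S n).2
      have h2 : (4:ℝ)*((n:ℝ)+1) * ((4:ℝ)^n * n.factorial) ≤ 4*((n:ℝ)+1)*q n := by
        apply mul_le_mul_of_nonneg_left ih (by positivity)
      calc (4:ℝ)^(n+1) * (n+1).factorial
          = 4*((n:ℝ)+1) * ((4:ℝ)^n * n.factorial) := by
            rw [Nat.factorial_succ]; push_cast; ring
        _ ≤ 4*((n:ℝ)+1)*q n := h2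
        _ ≤ q (n+1) := h1
  -- rewrite the sequence
  have heq : (fun n : ℕ => p n / q n) = fun n : ℕ => Real.log 2 - Eerr n / q n := by
    funext n
    have h := key n
    have hqn : q n ≠ 0 := (S n).1.ne'
    field_simp
    linarith
  rw [heq]
  have hlim : Tendsto (fun n : ℕ => Eerr n / q n) atTop (nhds 0) := by
    apply squeeze_zero
    · intro n
      exact div_nonneg (Eerr_nonneg n) (S n).1.le
    · intro n
      have hfac : (0:ℝ) < n.factorial := by positivity
      have h4 : (0:ℝ) < (4:ℝ)^n * n.factorial := by positivity
      calc Eerr n / q n ≤ (3/2 * n.factorial) / ((4:ℝ)^n * n.factorial) :=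
            div_le_div₀ (by positivity) (Eerr_le n) h4 (qfact n)
        _ = 3/2 * (1/4:ℝ)^n := by
            field_simp
            rw [← mul_pow]; norm_num
    · have h := tendsto_pow_atTop_nhds_zero_of_lt_one
        (show (0:ℝ) ≤ 1/4 by norm_num) (show (1/4:ℝ) < 1 by norm_num)
      simpa using h.const_mul (3/2:ℝ)
  simpa using tendsto_const_nhds.sub hlim
end

section
/- Define sequences p, q by p(-1)=1, p(0)=0, q(-1)=0, q(0)=1, p(1) = 1·p(0) + 4·p(-1), q(1) = 1·q(0) + 4·q(-1), and for n ≥ 2: p(n) = 2·p(n-1) + (2n-3)²·p(n-2), q(n) = 2·q(n-1) + (2n-3)²·q(n-2). Then p(n)/q(n) converges to π as n → ∞. -/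
open Filter Real

private def Dfac : ℕ → ℝ
  | 0 => 1
  | n + 1 => (2 * n + 1) * Dfac n

private lemma Dfac_succ (n : ℕ) : Dfac (n + 1) = (2 * (n : ℝ) + 1) * Dfac n := rfl

private lemma Dfac_pos : ∀ n, 0 < Dfac n
  | 0 => one_pos
  | n + 1 => mul_pos (by positivity) (Dfac_pos n)

theorem pi_cf (p q : ℤ → ℝ)
    (hpm1 : p (-1) = 1) (hp0 : p 0 = 0) (hqm1 : q (-1) = 0) (hq0 : q 0 = 1)
    (hp1 : p 1 = 1 * p 0 + 4 * p (-1)) (hq1 : q 1 = 1 * q 0 + 4 * q (-1))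
    (hp : ∀ n : ℤ, 2 ≤ n →
      p n = 2 * p (n - 1) + (2 * (n : ℝ) - 3) ^ 2 * p (n - 2))
    (hq : ∀ n : ℤ, 2 ≤ n →
      q n = 2 * q (n - 1) + (2 * (n : ℝ) - 3) ^ 2 * q (n - 2)) :
    Tendsto (fun n : ℕ => p n / q n) atTop (nhds π) := by
  set S : ℕ → ℝ := fun n => 4 * ∑ k ∈ Finset.range n, (-1 : ℝ) ^ k / (2 * k + 1) with hS
  have hSstep : ∀ n : ℕ, S (n + 1) = S n + 4 * (-1 : ℝ) ^ n / (2 * n + 1) := by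
    intro n
    simp only [hS, Finset.sum_range_succ]
    ring
  have key : ∀ n : ℕ, (q n = Dfac n ∧ p n = Dfac n * S n) ∧
      (q ((n : ℤ) + 1) = Dfac (n + 1) ∧ p ((n : ℤ) + 1) = Dfac (n + 1) * S (n + 1)) := by
    intro n
    induction n with
    | zero =>
      refine ⟨⟨by simpa [Dfac] using hq0, ?_⟩, ⟨?_, ?_⟩⟩
      · simp [hp0, hS, Dfac]
      · norm_num [hq1, hq0, hqm1, Dfac]
      · norm_num [hp1, hp0, hpm1, Dfac, hS, Finset.sum_range_succ]
    | succ n ih =>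
      have hq1' := ih.2.1
      have hp1' := ih.2.2
      have hq2 := hq ((n : ℤ) + 2) (by omega)
      have hp2 := hp ((n : ℤ) + 2) (by omega)
      have e1 : (n : ℤ) + 2 - 1 = (n : ℤ) + 1 := by ring
      have e2 : (n : ℤ) + 2 - 2 = (n : ℤ) := by ring
      rw [e1, e2] at hq2 hp2
      have hqn := ih.1.1
      have hpn := ih.1.2
      have hcast : ((((n : ℤ) + 2 : ℤ) : ℝ)) = (n : ℝ) + 2 := by push_cast; ring
      rw [hcast] at hq2 hp2
      have hn1 : ((n : ℕ) + 1 : ℤ) = (n : ℤ) + 1 := by ring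
      have hn2 : ((n : ℕ) + 1 : ℤ) + 1 = (n : ℤ) + 2 := by ring
      refine ⟨⟨by exact_mod_cast hq1', by exact_mod_cast hp1'⟩, ?_, ?_⟩
      · push_cast
        rw [show (n:ℤ)+1+1 = (n:ℤ)+2 from by ring, hq2, hq1', hqn]
        rw [Dfac_succ (n + 1), Dfac_succ n]
        push_cast
        ring
      · push_cast
        rw [show (n:ℤ)+1+1 = (n:ℤ)+2 from by ring, hp2, hp1', hpn]
        rw [Dfac_succ (n + 1), Dfac_succ n, hSstep (n + 1), hSstep n]
        have h1 : (2 * (n : ℝ) + 1) ≠ 0 := by positivity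
        have h2 : (2 * ((n : ℝ) + 1) + 1) ≠ 0 := by positivity
        push_cast
        field_simp
        ring
  have heq : ∀ n : ℕ, p n / q n = S n := by
    intro n
    rw [(key n).1.2, (key n).1.1, mul_comm, mul_div_assoc, div_self (Dfac_pos n).ne', mul_one]
  have hlim : Tendsto S atTop (nhds π) := by
    have h := Real.tendsto_sum_pi_div_four.const_mul (4 : ℝ)
    have : (4 : ℝ) * (π / 4) = π := by ring
    rw [this] at h
    exact h
  simpa only [heq] using hlim
end

section
/- Define sequences p, q by p(-1)=1, p(0)=2, q(-1)=0, q(0)=1, and for n ≥ 1: p(n) = (n+1)·p(n-1) + (n+1)·p(n-2), q(n) = (n+1)·q(n-1) + (n+1)·q(n-2). Then p(n)/q(n) converges to e = exp(1) as n → ∞. -/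
open Filter Real

theorem e_cf (p q : ℤ → ℝ)
    (hpm1 : p (-1) = 1) (hp0 : p 0 = 2) (hqm1 : q (-1) = 0) (hq0 : q 0 = 1)
    (hp : ∀ n : ℤ, 1 ≤ n →
      p n = ((n : ℝ) + 1) * p (n - 1) + ((n : ℝ) + 1) * p (n - 2))
    (hq : ∀ n : ℤ, 1 ≤ n →
      q n = ((n : ℝ) + 1) * q (n - 1) + ((n : ℝ) + 1) * q (n - 2)) :
    Tendsto (fun n : ℕ => p n / q n) atTop (nhds (Real.exp 1)) := by
  set P : ℕ → Prop := fun n =>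
    p n = ((n + 2).factorial : ℝ) ∧ q n = (numDerangements (n + 2) : ℝ) with hP
  have key : ∀ n : ℕ, P n ∧ P (n + 1) := by
    intro n
    induction n with
    | zero =>
      constructor
      · exact ⟨by norm_num [hp0], by norm_num [hq0, show numDerangements 2 = 1 from rfl]⟩
      · have h1 : ((1:ℕ) : ℤ) = 1 := by norm_num
        constructor
        · rw [h1, hp 1 le_rfl]
          norm_num [hp0, hpm1, Nat.factorial]
        · rw [h1, hq 1 le_rfl]
          norm_num [hq0, hqm1, show numDerangements 3 = 2 from rfl]
    | succ n ih =>
      refine ⟨ih.2, ?_⟩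
      have hn2 : (1 : ℤ) ≤ ((n + 2 : ℕ) : ℤ) := by omega
      have e1 : ((n + 2 : ℕ) : ℤ) - 1 = ((n + 1 : ℕ) : ℤ) := by push_cast; ring
      have e2 : ((n + 2 : ℕ) : ℤ) - 2 = ((n : ℕ) : ℤ) := by push_cast; ring
      constructor
      · rw [show ((n + 1 + 1 : ℕ) : ℤ) = ((n + 2 : ℕ) : ℤ) by push_cast; ring,
          hp _ hn2, e1, e2, ih.1.1, ih.2.1]
        rw [show (n + 1 + 1 + 2) = (n + 2 + 2) by ring,
          show (n + 1 + 2) = (n + 3) by ring]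
        rw [show (n + 2 + 2).factorial = (n + 4) * (n + 3).factorial by
            rw [show n + 2 + 2 = (n + 3) + 1 by ring, Nat.factorial_succ],
          show (n + 3).factorial = (n + 3) * (n + 2).factorial by
            rw [show n + 3 = (n + 2) + 1 by ring, Nat.factorial_succ]]
        push_cast
        ring
      · rw [show ((n + 1 + 1 : ℕ) : ℤ) = ((n + 2 : ℕ) : ℤ) by push_cast; ring,
          hq _ hn2, e1, e2, ih.1.2, ih.2.2]
        rw [show numDerangements (n + 1 + 1 + 2) =
            (n + 3) * (numDerangements (n + 2) + numDerangements (n + 1 + 2)) from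
            numDerangements_add_two (n + 2)]
        push_cast
        ring
  have hpq : ∀ n : ℕ, p n / q n =
      (((numDerangements (n + 2) : ℝ)) / ((n + 2).factorial : ℝ))⁻¹ := by
    intro n
    rw [(key n).1.1, (key n).1.2, inv_div]
  have hbase : Tendsto (fun n : ℕ =>
      ((numDerangements (n + 2) : ℝ)) / ((n + 2).factorial : ℝ)) atTop
      (nhds (Real.exp (-1))) :=
    numDerangements_tendsto_inv_e.comp (tendsto_add_atTop_nat 2)
  have hne : Real.exp (-1) ≠ 0 := Real.exp_ne_zero _
  have := hbase.inv₀ hne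
  rw [← Real.exp_neg, neg_neg] at this
  simpa [hpq] using this
end

section
/- Let z be a real number. Define sequences p, q by p(-1)=1, p(0)=0, q(-1)=0, q(0)=1, and for n ≥ 1: p(n) = (2n-1)·p(n-1) + b(n-1)·p(n-2), q(n) = (2n-1)·q(n-1) + b(n-1)·q(n-2), where b(0)=z and b(n)=z² for n ≥ 1. Then p(n)/q(n) converges to tanh(z) as n → ∞. -/
open Filter Real
open Nat

noncomputable def Jint (z : ℝ) (n : ℕ) : ℝ := ∫ t in (-1:ℝ)..1, Real.exp (z*t) * (1-t^2)^n

lemma Jint_intble (z : ℝ) (n : ℕ) :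
    IntervalIntegrable (fun t : ℝ => Real.exp (z*t) * (1-t^2)^n) MeasureTheory.volume (-1) 1 :=
  (by fun_prop : Continuous fun t : ℝ => Real.exp (z*t) * (1-t^2)^n).intervalIntegrable _ _

lemma Jint_bound (z : ℝ) (n : ℕ) : |Jint z n| ≤ 2 * Real.exp |z| := by
  have h : ∀ t ∈ Set.uIoc (-1:ℝ) 1, ‖Real.exp (z*t) * (1-t^2)^n‖ ≤ Real.exp |z| := by
    intro t ht
    rw [Set.uIoc_of_le (by norm_num)] at ht
    obtain ⟨h1, h2⟩ := ht
    have ht2 : 0 ≤ 1 - t^2 := by nlinarith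
    have ht3 : 1 - t^2 ≤ 1 := by nlinarith
    rw [norm_mul, Real.norm_eq_abs, Real.norm_eq_abs, Real.abs_exp, abs_of_nonneg (by positivity)]
    have h4 : (1-t^2)^n ≤ 1 := pow_le_one₀ ht2 ht3
    have h5 : Real.exp (z*t) ≤ Real.exp |z| := by
      apply Real.exp_le_exp.2
      calc z * t ≤ |z*t| := le_abs_self _
        _ = |z| * |t| := abs_mul _ _
        _ ≤ |z| * 1 := by
            apply mul_le_mul_of_nonneg_left _ (abs_nonneg z)
            rw [abs_le]; constructor <;> linarith
        _ = |z| := mul_one _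
    calc Real.exp (z*t) * (1-t^2)^n ≤ Real.exp |z| * 1 :=
          mul_le_mul h5 h4 (by positivity) (le_of_lt (Real.exp_pos _))
      _ = Real.exp |z| := mul_one _
  have h2 := intervalIntegral.norm_integral_le_of_norm_le_const h
  rw [show ((1:ℝ) - (-1)) = 2 by norm_num] at h2
  have : |Jint z n| ≤ Real.exp |z| * |2| := by simpa [Jint, Real.norm_eq_abs] using h2
  simpa [abs_of_nonneg, mul_comm] using this

lemma Jint_zero (z : ℝ) : z * Jint z 0 = Real.exp z - Real.exp (-z) := by
  have hderiv : ∀ t ∈ Set.uIcc (-1:ℝ) 1, HasDerivAt (fun t : ℝ => Real.exp (z*t))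
      (z * Real.exp (z*t)) t := by
    intro t _
    have := (Real.hasDerivAt_exp (z*t)).comp t ((hasDerivAt_id t).const_mul z)
    exact this.congr_deriv (by ring)
  have h := intervalIntegral.integral_eq_sub_of_hasDerivAt hderiv
    ((by fun_prop : Continuous fun t : ℝ => z * Real.exp (z*t)).intervalIntegrable _ _)
  have h2 : ∫ t in (-1:ℝ)..1, z * Real.exp (z*t) = z * Jint z 0 := by
    rw [Jint, ← intervalIntegral.integral_const_mul]
    congr 1; funext t; ring
  rw [h2] at h
  rw [h]; ring_nf

lemma Jint_one (z : ℝ) : z^3 * Jint z 1 = 4*z*Real.cosh z - 4*Real.sinh z := by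
  have hderiv : ∀ t ∈ Set.uIcc (-1:ℝ) 1, HasDerivAt
      (fun t : ℝ => Real.exp (z*t) * (z^2*(1-t^2) + 2*z*t - 2))
      (z^3 * (Real.exp (z*t) * (1-t^2))) t := by
    intro t _
    have he : HasDerivAt (fun t : ℝ => Real.exp (z*t)) (z * Real.exp (z*t)) t := by
      have := (Real.hasDerivAt_exp (z*t)).comp t ((hasDerivAt_id t).const_mul z)
      exact this.congr_deriv (by ring)
    have hu : HasDerivAt (fun t : ℝ => 1 - t^2) (-(2*t)) t := by
      simpa using ((hasDerivAt_pow 2 t).const_sub 1)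
    have hP : HasDerivAt (fun t : ℝ => z^2*(1-t^2) + 2*z*t - 2)
        (z^2*(-(2*t)) + 2*z*1) t := by
      exact (((hu.const_mul (z^2)).add ((hasDerivAt_id t).const_mul (2*z))).sub_const 2)
    have := he.mul hP
    refine this.congr_deriv ?_
    ring
  have h := intervalIntegral.integral_eq_sub_of_hasDerivAt hderiv
    ((by fun_prop : Continuous fun t : ℝ => z^3 * (Real.exp (z*t) * (1-t^2))).intervalIntegrable _ _)
  have h2 : ∫ t in (-1:ℝ)..1, z^3 * (Real.exp (z*t) * (1-t^2)) = z^3 * Jint z 1 := by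
    rw [Jint, ← intervalIntegral.integral_const_mul]
    congr 1; funext t; ring
  rw [h2] at h
  rw [h, Real.cosh_eq, Real.sinh_eq]; ring_nf

lemma Jint_rec (z : ℝ) (n : ℕ) :
    z^2 * Jint z (n+2) =
      (4*(n:ℝ)+4)*((n:ℝ)+2) * Jint z n - (2*(n:ℝ)+4)*(2*(n:ℝ)+3) * Jint z (n+1) := by
  set c1 : ℝ := (2*(n:ℝ)+4)*(2*(n:ℝ)+3) with hc1
  set c2 : ℝ := (4*(n:ℝ)+4)*((n:ℝ)+2) with hc2
  have hderiv : ∀ t ∈ Set.uIcc (-1:ℝ) 1, HasDerivAt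
      (fun t : ℝ => Real.exp (z*t) * (z*(1-t^2)^(n+2) + (2*(n:ℝ)+4)*(t*(1-t^2)^(n+1))))
      (Real.exp (z*t) * (z^2*(1-t^2)^(n+2) + c1*(1-t^2)^(n+1) - c2*(1-t^2)^n)) t := by
    intro t _
    have he : HasDerivAt (fun t : ℝ => Real.exp (z*t)) (z * Real.exp (z*t)) t := by
      have := (Real.hasDerivAt_exp (z*t)).comp t ((hasDerivAt_id t).const_mul z)
      exact this.congr_deriv (by ring)
    have hu : HasDerivAt (fun t : ℝ => 1 - t^2) (-(2*t)) t := by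
      simpa using ((hasDerivAt_pow 2 t).const_sub 1)
    have hu2 : HasDerivAt (fun t : ℝ => (1-t^2)^(n+2))
        (((n:ℝ)+2) * (1-t^2)^(n+1) * (-(2*t))) t := by
      have := hu.pow (n+2)
      norm_num at this
      refine this.congr_deriv ?_
      ring
    have hu1 : HasDerivAt (fun t : ℝ => (1-t^2)^(n+1))
        (((n:ℝ)+1) * (1-t^2)^n * (-(2*t))) t := by
      have := hu.pow (n+1)
      norm_num at this
      refine this.congr_deriv ?_
      ring
    have hP : HasDerivAt (fun t : ℝ => z*(1-t^2)^(n+2) + (2*(n:ℝ)+4)*(t*(1-t^2)^(n+1)))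
        (z*(((n:ℝ)+2) * (1-t^2)^(n+1) * (-(2*t)))
          + (2*(n:ℝ)+4)*(1*(1-t^2)^(n+1) + t*(((n:ℝ)+1)*(1-t^2)^n*(-(2*t))))) t :=
      (hu2.const_mul z).add (((hasDerivAt_id t).mul hu1).const_mul _)
    have := he.mul hP
    refine this.congr_deriv ?_
    rw [hc1, hc2]
    ring
  have hint := intervalIntegral.integral_eq_sub_of_hasDerivAt hderiv
    ((by fun_prop : Continuous fun t : ℝ =>
      Real.exp (z*t) * (z^2*(1-t^2)^(n+2) + c1*(1-t^2)^(n+1) - c2*(1-t^2)^n)).intervalIntegrable _ _)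
  have hzero : ∫ t in (-1:ℝ)..1,
      Real.exp (z*t) * (z^2*(1-t^2)^(n+2) + c1*(1-t^2)^(n+1) - c2*(1-t^2)^n) = 0 := by
    rw [hint]
    norm_num
  have hsplit : ∫ t in (-1:ℝ)..1,
      Real.exp (z*t) * (z^2*(1-t^2)^(n+2) + c1*(1-t^2)^(n+1) - c2*(1-t^2)^n)
      = z^2 * Jint z (n+2) + c1 * Jint z (n+1) - c2 * Jint z n := by
    rw [show (fun t : ℝ => Real.exp (z*t) * (z^2*(1-t^2)^(n+2) + c1*(1-t^2)^(n+1) - c2*(1-t^2)^n))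
        = fun t : ℝ => (z^2 * (Real.exp (z*t)*(1-t^2)^(n+2)) + c1 * (Real.exp (z*t)*(1-t^2)^(n+1)))
          - c2 * (Real.exp (z*t)*(1-t^2)^n) from funext fun t => by ring]
    rw [intervalIntegral.integral_sub (((Jint_intble z (n+2)).const_mul _).add
        ((Jint_intble z (n+1)).const_mul _)) ((Jint_intble z n).const_mul _),
      intervalIntegral.integral_add ((Jint_intble z (n+2)).const_mul _)
        ((Jint_intble z (n+1)).const_mul _),
      intervalIntegral.integral_const_mul, intervalIntegral.integral_const_mul,
      intervalIntegral.integral_const_mul]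
    rfl
  rw [hsplit] at hzero
  linarith


theorem tanh_cf (z : ℝ) (p q b : ℤ → ℝ)
    (hb0 : b 0 = z) (hb : ∀ n : ℤ, 1 ≤ n → b n = z ^ 2)
    (hpm1 : p (-1) = 1) (hp0 : p 0 = 0) (hqm1 : q (-1) = 0) (hq0 : q 0 = 1)
    (hp : ∀ n : ℤ, 1 ≤ n →
      p n = (2 * (n : ℝ) - 1) * p (n - 1) + b (n - 1) * p (n - 2))
    (hq : ∀ n : ℤ, 1 ≤ n →
      q n = (2 * (n : ℝ) - 1) * q (n - 1) + b (n - 1) * q (n - 2)) :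
    Tendsto (fun n : ℕ => p n / q n) atTop (nhds (Real.tanh z)) := by
  -- basic values
  have hq1 : q 1 = 1 := by
    have h := hq 1 le_rfl
    norm_num at h
    rw [h, hq0, hqm1]; ring
  have hp1 : p 1 = z := by
    have h := hp 1 le_rfl
    norm_num at h
    rw [h, hp0, hpm1, hb0]; ring
  -- recurrences over ℕ
  have hqrec : ∀ n : ℕ, q ((n:ℤ)+2) = (2*(n:ℝ)+3) * q ((n:ℤ)+1) + z^2 * q (n:ℤ) := by
    intro n
    have h := hq ((n:ℤ)+2) (by omega)
    have hb' := hb ((n:ℤ)+1) (by omega)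
    rw [show ((n:ℤ)+2)-1 = (n:ℤ)+1 by ring, show ((n:ℤ)+2)-2 = (n:ℤ) by ring] at h
    rw [h, hb']
    push_cast
    ring
  have hprec : ∀ n : ℕ, p ((n:ℤ)+2) = (2*(n:ℝ)+3) * p ((n:ℤ)+1) + z^2 * p (n:ℤ) := by
    intro n
    have h := hp ((n:ℤ)+2) (by omega)
    have hb' := hb ((n:ℤ)+1) (by omega)
    rw [show ((n:ℤ)+2)-1 = (n:ℤ)+1 by ring, show ((n:ℤ)+2)-2 = (n:ℤ) by ring] at h
    rw [h, hb']
    push_cast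
    ring
  -- q is at least 1
  have hqge : ∀ n : ℕ, 1 ≤ q (n:ℤ) ∧ 1 ≤ q ((n:ℤ)+1) := by
    intro n
    induction n with
    | zero =>
      constructor
      · simpa using le_of_eq hq0.symm
      · simpa using le_of_eq hq1.symm
    | succ m ih =>
      obtain ⟨h1, h2⟩ := ih
      have h3 : 1 ≤ q ((m:ℤ)+2) := by
        rw [hqrec m]
        nlinarith [sq_nonneg z]
      refine ⟨by exact_mod_cast h2, ?_⟩
      have hc : ((m+1:ℕ):ℤ)+1 = (m:ℤ)+2 := by push_cast; ring
      rw [hc]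
      exact h3
  -- key closed form for the error term
  have key : ∀ n : ℕ, 2^(n+1) * (n ! : ℝ) * (p (n:ℤ) * Real.cosh z - q (n:ℤ) * Real.sinh z)
      = (-1)^(n+1) * z^(2*n+1) * Jint z n := by
    have main : ∀ n : ℕ,
        (2^(n+1) * (n ! : ℝ) * (p (n:ℤ) * Real.cosh z - q (n:ℤ) * Real.sinh z)
          = (-1)^(n+1) * z^(2*n+1) * Jint z n) ∧
        (2^(n+2) * ((n+1) ! : ℝ) * (p ((n:ℤ)+1) * Real.cosh z - q ((n:ℤ)+1) * Real.sinh z)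
          = (-1)^(n+2) * z^(2*(n+1)+1) * Jint z (n+1)) := by
      intro n
      induction n with
      | zero =>
        constructor
        · have hJ := Jint_zero z
          simp only [Nat.factorial_zero, Nat.cast_zero, Nat.cast_one]
          rw [hp0, hq0, Real.sinh_eq]
          linear_combination hJ
        · have hJ := Jint_one z
          have h01 : ((0:ℕ):ℤ)+1 = 1 := rfl
          rw [h01, hp1, hq1]
          norm_num [Nat.factorial]
          linear_combination -hJ
      | succ m ih =>
        obtain ⟨ih0, ih1⟩ := ih
        refine ⟨ih1, ?_⟩
        have jrec := Jint_rec z m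
        have hrp := hprec m
        have hrq := hqrec m
        have hfac : (((m+1+1)!) : ℝ) = ((m:ℝ)+2) * ((m:ℝ)+1) * (m ! : ℝ) := by
          rw [Nat.factorial_succ, Nat.factorial_succ]
          push_cast
          ring
        have hfac1 : (((m+1)!) : ℝ) = ((m:ℝ)+1) * (m ! : ℝ) := by
          rw [Nat.factorial_succ]
          push_cast
          ring
        push_cast
        rw [show ((m:ℤ)+1+1) = (m:ℤ)+2 by ring, hrp, hrq, hfac]
        rw [hfac1] at ih1
        have e1 : ((-1:ℝ))^(m+1+1+1) = -((-1:ℝ))^(m+1+1) := by ring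
        have e2 : ((-1:ℝ))^(m+1+1) = ((-1:ℝ))^(m+1) * (-1) := by ring
        linear_combination (2*((m:ℝ)+2)*(2*(m:ℝ)+3)) * ih1
          + (4*((m:ℝ)+2)*((m:ℝ)+1)*z^2) * ih0
          + ((-1:ℝ)^(m+2) * z^(2*m+3)) * jrec
    exact fun n => (main n).1
  -- bound on the error term
  have hEbound : ∀ n : ℕ, |p (n:ℤ) * Real.cosh z - q (n:ℤ) * Real.sinh z|
      ≤ Real.exp |z| * (|z| * (z^2/2)^n / (n ! : ℝ)) := by
    intro n
    have h2 : (0:ℝ) < 2^(n+1) * (n ! : ℝ) := by positivity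
    have hEn : p (n:ℤ) * Real.cosh z - q (n:ℤ) * Real.sinh z
        = ((-1)^(n+1) * z^(2*n+1) * Jint z n) / (2^(n+1) * (n ! : ℝ)) := by
      rw [eq_div_iff h2.ne']
      linear_combination key n
    rw [hEn, abs_div, abs_mul, abs_mul, abs_pow, abs_neg, abs_one, one_pow, one_mul,
      abs_of_pos h2, abs_pow]
    have hb1 : |z|^(2*n+1) * |Jint z n| / (2^(n+1) * (n ! : ℝ))
        ≤ |z|^(2*n+1) * (2 * Real.exp |z|) / (2^(n+1) * (n ! : ℝ)) := by
      gcongr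
      exact Jint_bound z n
    refine hb1.trans (le_of_eq ?_)
    have hne : ((n ! : ℝ)) ≠ 0 := by positivity
    have hne2 : ((2:ℝ))^(n+1) ≠ 0 := by positivity
    have hzn : (z^2)^n = |z|^(2*n) := by rw [← sq_abs z, ← pow_mul]
    field_simp
    rw [div_pow, hzn]
    field_simp
    ring
  -- the bound tends to zero
  have hM : Tendsto (fun n : ℕ => Real.exp |z| * (|z| * (z^2/2)^n / (n ! : ℝ))) atTop (nhds 0) := by
    have h := FloorSemiring.tendsto_pow_div_factorial_atTop (z^2/2)
    have h2 := h.const_mul (Real.exp |z| * |z|)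
    rw [mul_zero] at h2
    convert h2 using 2 with n
    ring
  -- comparison with the quotient
  have habs : ∀ n : ℕ, |p (n:ℤ) / q (n:ℤ) - Real.tanh z|
      ≤ |p (n:ℤ) * Real.cosh z - q (n:ℤ) * Real.sinh z| := by
    intro n
    have hqn : 1 ≤ q (n:ℤ) := (hqge n).1
    have hc : 1 ≤ Real.cosh z := Real.one_le_cosh z
    have heq : p (n:ℤ) / q (n:ℤ) - Real.tanh z
        = (p (n:ℤ) * Real.cosh z - q (n:ℤ) * Real.sinh z) / (q (n:ℤ) * Real.cosh z) := by
      rw [Real.tanh_eq_sinh_div_cosh]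
      field_simp
    rw [heq, abs_div]
    have h1 : 1 ≤ |q (n:ℤ) * Real.cosh z| := by
      rw [abs_of_pos (by nlinarith)]
      nlinarith
    exact div_le_self (abs_nonneg _) h1
  have hle : ∀ n : ℕ, ‖p (n:ℤ) / q (n:ℤ) - Real.tanh z‖
      ≤ Real.exp |z| * (|z| * (z^2/2)^n / (n ! : ℝ)) := by
    intro n
    rw [Real.norm_eq_abs]
    exact (habs n).trans (hEbound n)
  have hfinal : Tendsto (fun n : ℕ => p (n:ℤ) / q (n:ℤ) - Real.tanh z) atTop (nhds 0) :=
    squeeze_zero_norm hle hM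
  have := tendsto_sub_nhds_zero_iff.mp hfinal
  exact this
end

section
/- Let z be a real number with |z| < 1. Define sequences p, q by p(-1)=1, p(0)=0, q(-1)=0, q(0)=1, and for n ≥ 1: p(n) = (2n-1)·p(n-1) + b(n-1)·p(n-2), q(n) = (2n-1)·q(n-1) + b(n-1)·q(n-2), where b(0)=z and b(n) = -z²n² for n ≥ 1. Then p(n)/q(n) converges to artanh(z) = (1/2)·log((1+z)/(1-z)) as n → ∞. -/
open Filter Real Set intervalIntegral

namespace ArtanhCF

noncomputable def S (z : ℝ) (n : ℕ) : ℝ := ∫ t in (-1:ℝ)..1, (1 - t^2)^n / (1 - z*t)^(n+1)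

lemma Seq (z : ℝ) (n : ℕ) : S z n = ∫ t in (-1:ℝ)..1, (1 - t^2)^n / (1 - z*t)^(n+1) := rfl

lemma den_pos {z : ℝ} (hz : |z| < 1) {t : ℝ} (ht : t ∈ uIcc (-1:ℝ) 1) : 0 < 1 - z*t := by
  have h1 : |t| ≤ 1 := by
    rw [Set.uIcc_of_le (by norm_num : (-1:ℝ) ≤ 1)] at ht
    exact abs_le.2 ⟨ht.1, ht.2⟩
  have : z * t < 1 := by
    calc z * t ≤ |z * t| := le_abs_self _
    _ = |z| * |t| := abs_mul z t
    _ ≤ |z| * 1 := by nlinarith [abs_nonneg z]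
    _ < 1 := by simpa using hz
  linarith

lemma contOn {z : ℝ} (hz : |z| < 1) (n : ℕ) :
    ContinuousOn (fun t : ℝ => (1 - t^2)^n / (1 - z*t)^(n+1)) (uIcc (-1:ℝ) 1) := by
  apply ContinuousOn.div
  · fun_prop
  · fun_prop
  · exact fun t ht => pow_ne_zero _ (ne_of_gt (den_pos hz ht))

lemma intable {z : ℝ} (hz : |z| < 1) (n : ℕ) :
    IntervalIntegrable (fun t : ℝ => (1 - t^2)^n / (1 - z*t)^(n+1))
      MeasureTheory.volume (-1) 1 :=
  (contOn hz n).intervalIntegrable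

lemma hden {z t : ℝ} : HasDerivAt (fun t : ℝ => 1 - z*t) (-z) t := by
  simpa using ((hasDerivAt_id t).const_mul z).const_sub 1

lemma S0 {z : ℝ} (hz : |z| < 1) : z * S z 0 = Real.log ((1+z)/(1-z)) := by
  have h1 : (0:ℝ) < 1 + z := by cases abs_lt.1 hz; linarith
  have h2 : (0:ℝ) < 1 - z := by cases abs_lt.1 hz; linarith
  rcases eq_or_ne z 0 with rfl | hz0
  · simp
  have key : S z 0 = (fun t : ℝ => -(Real.log (1 - z*t)/z)) 1
      - (fun t : ℝ => -(Real.log (1 - z*t)/z)) (-1) := by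
    unfold S
    refine integral_eq_sub_of_hasDerivAt (f := fun t : ℝ => -(Real.log (1 - z*t)/z))
      (fun t ht => ?_) (intable hz 0)
    have hd := den_pos hz ht
    have h : HasDerivAt (fun t : ℝ => -(Real.log (1 - z*t)/z)) (-(-z/(1-z*t)/z)) t :=
      ((hden.log (ne_of_gt hd)).div_const z).neg
    refine h.congr_deriv ?_
    field_simp
    ring
  rw [key]
  rw [Real.log_div (by linarith) (by linarith)]
  field_simp
  ring

lemma S1 {z : ℝ} (hz : |z| < 1) : z^3 * S z 1 = 2*Real.log ((1+z)/(1-z)) - 4*z := by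
  have h1 : (0:ℝ) < 1 + z := by cases abs_lt.1 hz; linarith
  have h2 : (0:ℝ) < 1 - z := by cases abs_lt.1 hz; linarith
  rcases eq_or_ne z 0 with rfl | hz0
  · simp
  set F : ℝ → ℝ := fun t => ((z^2-1)/z * (1-z*t)⁻¹ - 2*(Real.log (1-z*t))/z - t)/z^2 with hF
  have key : S z 1 = F 1 - F (-1) := by
    rw [Seq]
    refine integral_eq_sub_of_hasDerivAt (f := F) (fun t ht => ?_) (intable hz 1)
    have hd := den_pos hz ht
    have hA : HasDerivAt (fun t : ℝ => (z^2-1)/z * (1-z*t)⁻¹)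
        ((z^2-1)/z * (-(-z)/(1-z*t)^2)) t := (hden.inv (ne_of_gt hd)).const_mul _
    have hB : HasDerivAt (fun t : ℝ => 2*(Real.log (1-z*t))/z) (2*(-z/(1-z*t))/z) t := by
      simpa [mul_div_assoc] using ((hden.log (ne_of_gt hd)).div_const z).const_mul 2
    have h : HasDerivAt F (((z^2-1)/z * (-(-z)/(1-z*t)^2) - 2*(-z/(1-z*t))/z - 1)/z^2) t :=
      ((hA.sub hB).sub (hasDerivAt_id t)).div_const _
    refine h.congr_deriv ?_
    field_simp
    ring
  rw [key, hF]
  simp only []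
  have e1 : 1 - z*(1:ℝ) = 1 - z := by ring
  have e2 : 1 - z*(-1:ℝ) = 1 + z := by ring
  rw [e1, e2, Real.log_div (by linarith) (by linarith)]
  field_simp
  ring

lemma Srec {z : ℝ} (hz : |z| < 1) (k : ℕ) :
    ((k:ℝ)+2)*z^2 * S z (k+2) = 2*(2*(k:ℝ)+3) * S z (k+1) - 4*((k:ℝ)+1) * S z k := by
  set g : ℝ → ℝ := fun t => (1-t^2)^(k+1) * (z*t^2 - 2*t + z) / (1-z*t)^(k+2) with hgdef
  set D : ℝ → ℝ := fun t => ((k:ℝ)+2)*z^2 * ((1-t^2)^(k+2)/(1-z*t)^(k+3))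
      - 2*(2*(k:ℝ)+3) * ((1-t^2)^(k+1)/(1-z*t)^(k+2))
      + 4*((k:ℝ)+1) * ((1-t^2)^k/(1-z*t)^(k+1)) with hDdef
  have hDint : IntervalIntegrable D MeasureTheory.volume (-1) 1 :=
    (((intable hz (k+2)).const_mul _).sub ((intable hz (k+1)).const_mul _)).add
      ((intable hz k).const_mul _)
  have h0 : (∫ t in (-1:ℝ)..1, D t) = g 1 - g (-1) := by
    refine integral_eq_sub_of_hasDerivAt (f := g) (fun t ht => ?_) hDint
    have hd := den_pos hz ht
    have hv : HasDerivAt (fun t : ℝ => (1-t^2)^(k+1))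
        (((k:ℝ)+1)*(1-t^2)^k * (-(2*t))) t := by
      have hb : HasDerivAt (fun t : ℝ => 1-t^2) (-(2*t)) t := by
        simpa using (hasDerivAt_pow 2 t).const_sub 1
      simpa using hb.fun_pow (k+1)
    have hq : HasDerivAt (fun t : ℝ => z*t^2 - 2*t + z) (z*(2*t) - 2) t := by
      have h1 : HasDerivAt (fun t : ℝ => t^2) (2*t) t := by simpa using hasDerivAt_pow 2 t
      simpa using ((h1.const_mul z).sub ((hasDerivAt_id t).const_mul 2)).add_const z
    have hw : HasDerivAt (fun t : ℝ => (1-z*t)^(k+2))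
        (((k:ℝ)+2)*(1-z*t)^(k+1)*(-z)) t := by simpa using hden.fun_pow (k+2)
    have hg := (hv.mul hq).div hw (pow_ne_zero _ (ne_of_gt hd))
    have hdne : (1-z*t) ≠ 0 := ne_of_gt hd
    have hval : ((((k:ℝ)+1)*(1-t^2)^k * (-(2*t)) * (z*t^2 - 2*t + z)
          + (1-t^2)^(k+1) * (z*(2*t) - 2)) * (1-z*t)^(k+2)
          - (1-t^2)^(k+1) * (z*t^2 - 2*t + z) * (((k:ℝ)+2)*(1-z*t)^(k+1)*(-z)))
          / ((1-z*t)^(k+2))^2 = D t := by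
      have hN : ((((k:ℝ)+1)*(1-t^2)^k * (-(2*t)) * (z*t^2 - 2*t + z)
          + (1-t^2)^(k+1) * (z*(2*t) - 2)) * (1-z*t)^(k+2)
          - (1-t^2)^(k+1) * (z*t^2 - 2*t + z) * (((k:ℝ)+2)*(1-z*t)^(k+1)*(-z)))
          = ((1-t^2)^k * ((((k:ℝ)+1) * (-(2*t)) * (z*t^2 - 2*t + z) * (1-z*t)
              + (1-t^2) * (z*(2*t) - 2) * (1-z*t)
              + (1-t^2) * (z*t^2 - 2*t + z) * (((k:ℝ)+2)*z)))) * (1-z*t)^(k+1) := by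
        ring
      have hDen : ((1-z*t)^(k+2))^2 = ((1-z*t)^k * (1-z*t)^3) * (1-z*t)^(k+1) := by
        ring
      rw [hN, hDen, mul_div_mul_right _ _ (pow_ne_zero _ hdne), mul_div_mul_comm]
      have hD2 : D t = ((1-t^2)^k/(1-z*t)^k) *
          (((k:ℝ)+2)*z^2 * ((1-t^2)^2/(1-z*t)^3)
           - 2*(2*(k:ℝ)+3) * ((1-t^2)/(1-z*t)^2)
           + 4*((k:ℝ)+1) * (1/(1-z*t))) := by
        rw [hDdef]
        beta_reduce
        have p1 : (1-t^2)^(k+2) = (1-t^2)^k * (1-t^2)^2 := by ring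
        have p2 : (1-z*t)^(k+3) = (1-z*t)^k * (1-z*t)^3 := by ring
        have p3 : (1-t^2)^(k+1) = (1-t^2)^k * (1-t^2) := by ring
        have p4 : (1-z*t)^(k+2) = (1-z*t)^k * (1-z*t)^2 := by ring
        have p5 : (1-z*t)^(k+1) = (1-z*t)^k * (1-z*t) := by ring
        rw [p1, p2, p3, p4, p5, mul_div_mul_comm, mul_div_mul_comm,
          ← div_div ((1-t^2)^k) _ _]
        have p6 : (1-t^2)^k / (1-z*t)^k / (1-z*t) =
            (1-t^2)^k/(1-z*t)^k * (1/(1-z*t)) := by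
          rw [mul_one_div, div_div]
        rw [p6]
        ring
      rw [hD2]
      congr 1
      field_simp
      ring
    rw [← hval]
    exact hg
  have g1 : g 1 = 0 := by simp [hgdef]
  have gm1 : g (-1) = 0 := by simp [hgdef]
  have hsplit : (∫ t in (-1:ℝ)..1, D t)
      = ((k:ℝ)+2)*z^2 * S z (k+2) - 2*(2*(k:ℝ)+3) * S z (k+1) + 4*((k:ℝ)+1) * S z k := by
    rw [hDdef]
    rw [integral_add (((intable hz (k+2)).const_mul _).sub ((intable hz (k+1)).const_mul _))
      ((intable hz k).const_mul _),
      integral_sub ((intable hz (k+2)).const_mul _) ((intable hz (k+1)).const_mul _),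
      integral_const_mul, integral_const_mul, integral_const_mul, Seq, Seq, Seq]
  rw [h0, g1, gm1] at hsplit
  linarith

lemma Sbound {z : ℝ} (hz : |z| < 1) (n : ℕ) :
    |z^(2*n) * S z n| ≤ ((2*(1 - Real.sqrt (1-z^2)))^n / (1-|z|)) * 2 := by
  set m : ℝ := 1 - Real.sqrt (1-z^2) with hm
  have hz2 : z^2 < 1 := by nlinarith [sq_abs z, abs_nonneg z]
  have hw2 : Real.sqrt (1-z^2)^2 = 1 - z^2 := Real.sq_sqrt (by linarith)
  have hwpos : 0 < Real.sqrt (1-z^2) := Real.sqrt_pos.2 (by linarith)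
  have hwle : Real.sqrt (1-z^2) ≤ 1 := by
    nlinarith [hw2, hwpos]
  have hm0 : 0 ≤ m := by rw [hm]; linarith
  have habs : 0 < 1 - |z| := by linarith
  have key : z^(2*n) * S z n = ∫ t in (-1:ℝ)..1,
      z^(2*n) * ((1 - t^2)^n / (1 - z*t)^(n+1)) := by
    rw [Seq, ← intervalIntegral.integral_const_mul]
  rw [key]
  have hb : ∀ t ∈ Set.uIoc (-1:ℝ) 1,
      ‖z^(2*n) * ((1 - t^2)^n / (1 - z*t)^(n+1))‖ ≤ (2*m)^n / (1-|z|) := by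
    intro t ht
    have ht' : t ∈ uIcc (-1:ℝ) 1 := by
      rw [Set.uIoc_of_le (by norm_num : (-1:ℝ) ≤ 1)] at ht
      rw [Set.uIcc_of_le (by norm_num : (-1:ℝ) ≤ 1)]
      exact ⟨le_of_lt ht.1, ht.2⟩
    have hd := den_pos hz ht'
    have htle : |t| ≤ 1 := by
      rw [Set.uIcc_of_le (by norm_num : (-1:ℝ) ≤ 1)] at ht'
      exact abs_le.2 ⟨ht'.1, ht'.2⟩
    have ht2 : t^2 ≤ 1 := by nlinarith [sq_abs t, abs_nonneg t]
    have hd2 : 1 - |z| ≤ 1 - z*t := by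
      have h5 : z*t ≤ |z| := by
        calc z*t ≤ |z*t| := le_abs_self _
        _ = |z| * |t| := abs_mul z t
        _ ≤ |z| * 1 := by nlinarith [abs_nonneg z]
        _ = |z| := mul_one _
      linarith
    have hkey : z^2*(1-t^2) ≤ 2*m*(1-z*t) := by
      nlinarith [sq_nonneg (z*t - m)]
    have hnum : z^(2*n) * (1-t^2)^n = (z^2*(1-t^2))^n := by
      rw [mul_pow, pow_mul]
    have hnn : 0 ≤ (z^2*(1-t^2))^n := pow_nonneg (by nlinarith) n
    rw [Real.norm_eq_abs, mul_div_assoc', hnum, abs_div,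
      abs_of_nonneg hnn, abs_of_pos (pow_pos hd _)]
    have step1 : (z^2*(1-t^2))^n ≤ (2*m*(1-z*t))^n :=
      pow_le_pow_left₀ (by nlinarith) hkey n
    have step2 : (z^2*(1-t^2))^n / (1-z*t)^(n+1) ≤ (2*m*(1-z*t))^n / (1-z*t)^(n+1) :=
      (div_le_div_iff_of_pos_right (pow_pos hd _)).2 step1
    have step3 : (2*m*(1-z*t))^n/(1-z*t)^(n+1) = (2*m)^n/(1-z*t) := by
      rw [mul_pow, pow_succ]
      field_simp
    have step4 : (2*m)^n/(1-z*t) ≤ (2*m)^n/(1-|z|) :=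
      div_le_div_of_nonneg_left (by positivity) habs hd2
    calc (z^2*(1-t^2))^n / (1-z*t)^(n+1) ≤ (2*m*(1-z*t))^n / (1-z*t)^(n+1) := step2
    _ = (2*m)^n/(1-z*t) := step3
    _ ≤ (2*m)^n/(1-|z|) := step4
  calc |∫ t in (-1:ℝ)..1, z^(2*n) * ((1 - t^2)^n / (1 - z*t)^(n+1))|
      ≤ (2*m)^n / (1-|z|) * |1 - (-1:ℝ)| :=
        intervalIntegral.norm_integral_le_of_norm_le_const hb
  _ = (2*m)^n / (1-|z|) * 2 := by norm_num

end ArtanhCF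

open ArtanhCF

theorem artanh_cf (z : ℝ) (hz : |z| < 1) (p q b : ℤ → ℝ)
    (hb0 : b 0 = z) (hb : ∀ n : ℤ, 1 ≤ n → b n = -z ^ 2 * (n : ℝ) ^ 2)
    (hpm1 : p (-1) = 1) (hp0 : p 0 = 0) (hqm1 : q (-1) = 0) (hq0 : q 0 = 1)
    (hp : ∀ n : ℤ, 1 ≤ n →
      p n = (2 * (n : ℝ) - 1) * p (n - 1) + b (n - 1) * p (n - 2))
    (hq : ∀ n : ℤ, 1 ≤ n →
      q n = (2 * (n : ℝ) - 1) * q (n - 1) + b (n - 1) * q (n - 2)) :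
    Tendsto (fun n : ℕ => p n / q n) atTop
      (nhds ((1 / 2) * Real.log ((1 + z) / (1 - z)))) := by
  have hz1 : (0:ℝ) < 1 + z := by cases abs_lt.1 hz; linarith
  have hz2 : (0:ℝ) < 1 - z := by cases abs_lt.1 hz; linarith
  have hzsq : z^2 < 1 := by nlinarith [sq_abs z, abs_nonneg z]
  set A : ℝ := (1/2) * Real.log ((1+z)/(1-z)) with hA
  set m : ℝ := 1 - Real.sqrt (1-z^2) with hmdef
  have hw2 : Real.sqrt (1-z^2)^2 = 1 - z^2 := Real.sq_sqrt (by linarith)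
  have hwpos : 0 < Real.sqrt (1-z^2) := Real.sqrt_pos.2 (by linarith)
  have hwle : Real.sqrt (1-z^2) ≤ 1 := by nlinarith
  have hm0 : 0 ≤ m := by rw [hmdef]; linarith
  have hm1 : m < 1 := by rw [hmdef]; linarith
  have habs : 0 < 1 - |z| := by linarith
  -- ℕ-level initial values
  have hq1 : q 1 = 1 := by
    have h := hq 1 le_rfl
    rw [show (1:ℤ)-1 = 0 by norm_num, show (1:ℤ)-2 = -1 by norm_num, hq0, hqm1, hb0] at h
    norm_num at h
    exact h
  have hp1 : p 1 = z := by
    have h := hp 1 le_rfl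
    rw [show (1:ℤ)-1 = 0 by norm_num, show (1:ℤ)-2 = -1 by norm_num, hp0, hpm1, hb0] at h
    norm_num at h
    exact h
  -- ℕ-level recurrences
  have hQs : ∀ k : ℕ, q (↑(k+2)) = (2*(k:ℝ)+3) * q (↑(k+1)) - z^2*((k:ℝ)+1)^2 * q (↑k) := by
    intro k
    have h := hq ((k:ℤ)+2) (by omega)
    have hb' := hb ((k:ℤ)+1) (by omega)
    rw [show (k:ℤ)+2-1 = (k:ℤ)+1 by ring, show (k:ℤ)+2-2 = (k:ℤ) by ring, hb'] at h
    push_cast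
    push_cast at h
    linarith [h]
  have hPs : ∀ k : ℕ, p (↑(k+2)) = (2*(k:ℝ)+3) * p (↑(k+1)) - z^2*((k:ℝ)+1)^2 * p (↑k) := by
    intro k
    have h := hp ((k:ℤ)+2) (by omega)
    have hb' := hb ((k:ℤ)+1) (by omega)
    rw [show (k:ℤ)+2-1 = (k:ℤ)+1 by ring, show (k:ℤ)+2-2 = (k:ℤ) by ring, hb'] at h
    push_cast
    push_cast at h
    linarith [h]
  -- positivity and growth of q
  have hQfact : ∀ n : ℕ, 0 < q ↑n ∧ (n.factorial : ℝ) ≤ q ↑n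
      ∧ ((n:ℝ)+1) * q ↑n ≤ q ↑(n+1) := by
    intro n
    induction n with
    | zero => rw [show ((0:ℕ):ℤ) = 0 by norm_num, show ((1:ℕ):ℤ) = 1 by norm_num, hq0, hq1]
              norm_num
    | succ n ih =>
      obtain ⟨h0, h1, h2⟩ := ih
      have hpos : 0 < q ↑(n+1) := by nlinarith
      refine ⟨hpos, ?_, ?_⟩
      · have : ((n+1).factorial : ℝ) = ((n:ℝ)+1) * (n.factorial : ℝ) := by
          rw [Nat.factorial_succ]; push_cast; ring
        rw [this]
        nlinarith
      · have hrec := hQs n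
        have t1 : z^2*((n:ℝ)+1)*(((n:ℝ)+1) * q ↑n) ≤ z^2*((n:ℝ)+1)* q ↑(n+1) :=
          mul_le_mul_of_nonneg_left h2 (by positivity)
        have t2 : z^2*(((n:ℝ)+1) * q ↑(n+1)) ≤ 1*(((n:ℝ)+1) * q ↑(n+1)) :=
          mul_le_mul_of_nonneg_right (le_of_lt hzsq)
            (le_of_lt (mul_pos (by positivity) hpos))
        have t0 : z^2*((n:ℝ)+1)^2*q ↑n = z^2*((n:ℝ)+1)*(((n:ℝ)+1)*q ↑n) := by ring
        push_cast
        push_cast at hrec t1 t2 t0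
        rw [show ((n:ℤ) + 1 + 1 : ℤ) = (n:ℤ) + 2 by ring]
        linarith [hrec, t1, t2, t0]
  -- main identity
  have main : ∀ n : ℕ, q ↑n * A - p ↑n
      = (n.factorial : ℝ) * z^(2*n+1)/2^(n+1) * S z n ∧
      q ↑(n+1) * A - p ↑(n+1)
      = ((n+1).factorial : ℝ) * z^(2*(n+1)+1)/2^((n+1)+1) * S z (n+1) := by
    intro n
    induction n with
    | zero =>
      constructor
      · rw [show ((0:ℕ):ℤ) = 0 by norm_num, hq0, hp0]
        have := S0 hz
        simp only [Nat.factorial_zero]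
        push_cast
        rw [hA]
        linarith [this]
      · have e : (((0:ℕ)+1 : ℕ) : ℤ) = 1 := by norm_num
        rw [e, hq1, hp1]
        have hs1 := S1 hz
        have hf : ((0:ℕ)+1).factorial = 1 := rfl
        rw [hf, hA]
        push_cast
        norm_num
        linarith [hs1]
    | succ n ih =>
      obtain ⟨ih0, ih1⟩ := ih
      refine ⟨ih1, ?_⟩
      have hrec : q ↑(n+2) * A - p ↑(n+2)
          = (2*(n:ℝ)+3) * (q ↑(n+1) * A - p ↑(n+1))
            - z^2*((n:ℝ)+1)^2 * (q ↑n * A - p ↑n) := by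
        rw [hQs n, hPs n]; ring
      rw [show n+1+1 = n+2 from rfl, hrec, ih0, ih1]
      have hS := Srec hz n
      have hf2 : ((n+2).factorial : ℝ) = ((n:ℝ)+2) * (((n:ℝ)+1) * (n.factorial : ℝ)) := by
        rw [Nat.factorial_succ, Nat.factorial_succ]; push_cast; ring
      have hf1 : ((n+1).factorial : ℝ) = ((n:ℝ)+1) * (n.factorial : ℝ) := by
        rw [Nat.factorial_succ]; push_cast; ring
      rw [hf2, hf1]
      push_cast
      linear_combination (-((n.factorial:ℝ) * ((n:ℝ)+1) * z^(2*n+3)/2^(n+3))) * hS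
  -- bound on the error
  have hEb : ∀ n : ℕ, |q ↑n * A - p ↑n| ≤ (n.factorial : ℝ) * (|z| * m^n / (1-|z|)) := by
    intro n
    rw [(main n).1]
    have e1 : (n.factorial : ℝ) * z^(2*n+1)/2^(n+1) * S z n
        = ((n.factorial : ℝ)/2^(n+1)) * z * (z^(2*n) * S z n) := by
      rw [pow_succ z (2*n)]; ring
    rw [e1, abs_mul, abs_mul]
    have e2 : |(n.factorial : ℝ)/2^(n+1)| = (n.factorial : ℝ)/2^(n+1) := by
      rw [abs_of_pos]; positivity
    rw [e2]
    have hSb := Sbound hz n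
    rw [← hmdef] at hSb
    calc (n.factorial : ℝ)/2^(n+1) * |z| * |z^(2*n) * S z n|
        ≤ (n.factorial : ℝ)/2^(n+1) * |z| * (((2*m)^n / (1-|z|)) * 2) := by
          apply mul_le_mul_of_nonneg_left hSb (by positivity)
    _ = (n.factorial : ℝ) * (|z| * m^n / (1-|z|)) := by
          rw [mul_pow, pow_succ]
          field_simp
  -- conclude
  have hQpos : ∀ n : ℕ, 0 < q ↑n := fun n => (hQfact n).1
  have heq : ∀ n : ℕ, p ↑n / q ↑n = A - (q ↑n * A - p ↑n) / q ↑n := by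
    intro n
    field_simp [ne_of_gt (hQpos n)]
    ring
  have hlim : Tendsto (fun n : ℕ => (q ↑n * A - p ↑n) / q ↑n) atTop (nhds 0) := by
    apply squeeze_zero_norm (a := fun n : ℕ => (|z| / (1-|z|)) * m^n)
    · intro n
      have hfpos : (0:ℝ) < (n.factorial : ℝ) := by positivity
      rw [Real.norm_eq_abs, abs_div, abs_of_pos (hQpos n)]
      calc |q ↑n * A - p ↑n| / q ↑n ≤ |q ↑n * A - p ↑n| / (n.factorial : ℝ) :=
            div_le_div_of_nonneg_left (abs_nonneg _) hfpos (hQfact n).2.1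
      _ ≤ ((n.factorial : ℝ) * (|z| * m^n / (1-|z|))) / (n.factorial : ℝ) := by
            gcongr
            exact hEb n
      _ = (|z| / (1-|z|)) * m^n := by field_simp
    · have : Tendsto (fun n : ℕ => m^n) atTop (nhds 0) :=
        tendsto_pow_atTop_nhds_zero_of_abs_lt_one (by rw [abs_of_nonneg hm0]; exact hm1)
      simpa using this.const_mul (|z| / (1-|z|))
  have final : Tendsto (fun n : ℕ => A - (q ↑n * A - p ↑n) / q ↑n) atTop (nhds (A - 0)) :=
    tendsto_const_nhds.sub hlim
  rw [sub_zero] at final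
  simp only [heq] at final ⊢
  exact final
end

section
/- Let z > 0 be real. Define sequences p, q by p(-1)=1, p(0)=0, q(-1)=0, q(0)=1, p(1) = z·p(0) + 1·p(-1), q(1) = z·q(0) + 1·q(-1), and for n ≥ 2: p(n) = p(n-1) + (n+z-2)²·p(n-2), q(n) = q(n-1) + (n+z-2)²·q(n-2). Then p(n)/q(n) converges to β(z) = Σ_{k≥0} (-1)^k/(k+z) as n → ∞. -/
open Filter Real

theorem beta_cf (z : ℝ) (hz : 0 < z) (β : ℝ)
    (hβ : Tendsto (fun N : ℕ => ∑ k ∈ Finset.range N, (-1 : ℝ) ^ k / ((k : ℝ) + z))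
      atTop (nhds β))
    (p q : ℤ → ℝ)
    (hpm1 : p (-1) = 1) (hp0 : p 0 = 0) (hqm1 : q (-1) = 0) (hq0 : q 0 = 1)
    (hp1 : p 1 = z * p 0 + 1 * p (-1)) (hq1 : q 1 = z * q 0 + 1 * q (-1))
    (hp : ∀ n : ℤ, 2 ≤ n →
      p n = p (n - 1) + ((n : ℝ) + z - 2) ^ 2 * p (n - 2))
    (hq : ∀ n : ℤ, 2 ≤ n →
      q n = q (n - 1) + ((n : ℝ) + z - 2) ^ 2 * q (n - 2)) :
    Tendsto (fun n : ℕ => p n / q n) atTop (nhds β) := by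
  set S : ℕ → ℝ := fun N => ∑ k ∈ Finset.range N, (-1 : ℝ) ^ k / ((k : ℝ) + z) with hS
  have hpos : ∀ n : ℕ, 0 < ∏ k ∈ Finset.range n, (z + (k : ℝ)) := by
    intro n
    exact Finset.prod_pos fun k _ => by positivity
  have key : ∀ n : ℕ, (q n = ∏ k ∈ Finset.range n, (z + (k : ℝ)) ∧ p n = S n * q n)
      ∧ (q (n + 1) = ∏ k ∈ Finset.range (n + 1), (z + (k : ℝ)) ∧
          p (n + 1) = S (n + 1) * q (n + 1)) := by
    intro n
    induction n with
    | zero =>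
      refine ⟨⟨by simpa using hq0, by simp [hS, hp0]⟩, ?_, ?_⟩
      · rw [show ((0 : ℕ) + 1 : ℤ) = 1 by norm_num, hq1, hq0, hqm1]
        simp
      · rw [show ((0 : ℕ) + 1 : ℤ) = 1 by norm_num, hp1, hq1, hp0, hpm1, hq0, hqm1]
        simp [hS]
        field_simp
    | succ n ih =>
      obtain ⟨⟨hqn, hpn⟩, hqn1, hpn1⟩ := ih
      have hcast : ((n : ℕ) + 1 + 1 : ℤ) = (n : ℤ) + 2 := by push_cast <;> try ring
      have h1 : ((n : ℤ) + 2) - 1 = ((n : ℕ) + 1 : ℤ) := by push_cast <;> try ring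
      have h2 : ((n : ℤ) + 2) - 2 = (n : ℤ) := by ring
      have hx : (0 : ℝ) < (n : ℝ) + z := by positivity
      have hx1 : (0 : ℝ) < (n : ℝ) + z + 1 := by positivity
      have hc : ((((n : ℤ) + 2 : ℤ) : ℝ) + z - 2) = (n : ℝ) + z := by push_cast <;> try ring
      have hq2 : q ((n : ℕ) + 1 + 1) = q ((n : ℕ) + 1) + ((n : ℝ) + z) ^ 2 * q n := by
        rw [hcast, hq ((n : ℤ) + 2) (by omega), h1, h2, hc]
      have hp2 : p ((n : ℕ) + 1 + 1) = p ((n : ℕ) + 1) + ((n : ℝ) + z) ^ 2 * p n := by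
        rw [hcast, hp ((n : ℤ) + 2) (by omega), h1, h2, hc]
      have hqval : q ((n : ℕ) + 1 + 1) = ∏ k ∈ Finset.range (n + 1 + 1), (z + (k : ℝ)) := by
        rw [hq2, hqn1, hqn]
        simp only [Finset.prod_range_succ]
        push_cast
        ring
      refine ⟨⟨hqn1, hpn1⟩, hqval, ?_⟩
      have hc2 : (((n : ℕ) + 1 : ℕ) : ℤ) + 1 = ((n : ℤ) + 1) + 1 := by push_cast <;> try ring
      rw [hc2, hp2, hpn1, hpn, hqval, hqn1, hqn]
      simp only [Finset.prod_range_succ]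
      have hS1 : S (n + 1) = S n + (-1 : ℝ) ^ n / ((n : ℝ) + z) := by
        simp [hS, Finset.sum_range_succ]
      have hS2 : S (n + 1 + 1) = S n + (-1 : ℝ) ^ n / ((n : ℝ) + z)
          + (-1 : ℝ) ^ (n + 1) / ((n : ℝ) + z + 1) := by
        simp [hS, Finset.sum_range_succ]
        push_cast
        ring
      rw [hS1, hS2]
      have hQ := hpos n
      set Q : ℝ := ∏ k ∈ Finset.range n, (z + (k : ℝ)) with hQdef
      have e1 : z + ((n : ℕ) : ℝ) = (n : ℝ) + z := by push_cast <;> try ring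
      have e2 : z + (((n : ℕ) + 1 : ℕ) : ℝ) = (n : ℝ) + z + 1 := by push_cast <;> try ring
      rw [e1, e2, pow_succ]
      field_simp
      ring
  have hqpos : ∀ n : ℕ, 0 < q n := fun n => by rw [(key n).1.1]; exact hpos n
  have heq : ∀ n : ℕ, p n / q n = S n := fun n => by
    rw [(key n).1.2, mul_div_assoc, div_self (hqpos n).ne', mul_one]
  exact hβ.congr fun n => (heq n).symm
end

section
/- For every real z, sinh(πz)/(πz) = 1 + z²·Σ_{n=0}^∞ (∏_{j=1}^{n} (j² + z²)) / ((n+1)!)², where for z = 0 the left side is interpreted as 1. -/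
open Real Filter Topology

private noncomputable def aSeq (z : ℝ) (n : ℕ) : ℝ :=
  (∏ j ∈ Finset.Icc 1 n, ((j : ℝ) ^ 2 + z ^ 2)) / ((n + 1).factorial : ℝ) ^ 2

private lemma partialAux_eq (z : ℝ) (N : ℕ) :
    (∏ j ∈ Finset.Icc 1 N, ((j : ℝ) ^ 2 + z ^ 2)) / ((N.factorial : ℝ)) ^ 2 =
      1 + z ^ 2 * ∑ m ∈ Finset.range N, aSeq z m := by
  induction N with
  | zero => simp
  | succ N ih =>
    have hf : ((N.factorial : ℝ)) ≠ 0 := Nat.cast_ne_zero.mpr N.factorial_ne_zero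
    have hf2 : (((N + 1).factorial : ℝ)) ≠ 0 := Nat.cast_ne_zero.mpr (N + 1).factorial_ne_zero
    have hN1 : ((N : ℝ) + 1) ≠ 0 := by positivity
    have hP := (div_eq_iff (by positivity : ((N.factorial : ℝ)) ^ 2 ≠ 0)).mp ih
    have haN : aSeq z N = ((1 + z ^ 2 * ∑ m ∈ Finset.range N, aSeq z m) *
        ((N.factorial : ℝ)) ^ 2) / (((N + 1).factorial : ℝ)) ^ 2 := by
      rw [show aSeq z N = (∏ j ∈ Finset.Icc 1 N, ((j : ℝ) ^ 2 + z ^ 2)) /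
        (((N + 1).factorial : ℝ)) ^ 2 from rfl, hP]
    rw [Finset.sum_range_succ,
      Finset.prod_Icc_succ_top (Nat.one_le_iff_ne_zero.mpr (Nat.succ_ne_zero N)), hP, haN,
      Nat.factorial_succ]
    set S := ∑ m ∈ Finset.range N, aSeq z m
    push_cast
    field_simp
    ring

private lemma prodAux_eq (z : ℝ) (N : ℕ) :
    (∏ j ∈ Finset.range N, ((1 : ℝ) + z ^ 2 / ((j : ℝ) + 1) ^ 2)) =
      (∏ j ∈ Finset.Icc 1 N, ((j : ℝ) ^ 2 + z ^ 2)) / ((N.factorial : ℝ)) ^ 2 := by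
  induction N with
  | zero => simp
  | succ N ih =>
    have hf : ((N.factorial : ℝ)) ≠ 0 := Nat.cast_ne_zero.mpr N.factorial_ne_zero
    have hN1 : ((N : ℝ) + 1) ≠ 0 := by positivity
    rw [Finset.prod_range_succ, ih,
      Finset.prod_Icc_succ_top (Nat.one_le_iff_ne_zero.mpr (Nat.succ_ne_zero N)),
      Nat.factorial_succ]
    push_cast
    field_simp

private lemma euler_sinh (z : ℝ) :
    Tendsto (fun n : ℕ => π * z * ∏ j ∈ Finset.range n, ((1 : ℝ) + z ^ 2 / ((j : ℝ) + 1) ^ 2))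
      atTop (𝓝 (Real.sinh (π * z))) := by
  have h := Complex.tendsto_euler_sin_prod (z * Complex.I)
  have h2 : Tendsto (fun n : ℕ =>
      (π * (z * Complex.I) * ∏ j ∈ Finset.range n,
        ((1 : ℂ) - (z * Complex.I) ^ 2 / ((j : ℂ) + 1) ^ 2)) * Complex.I⁻¹)
      atTop (𝓝 (Complex.sin (π * (z * Complex.I)) * Complex.I⁻¹)) := h.mul_const _
  have heq : ∀ n : ℕ, ((π : ℂ) * (z * Complex.I) * ∏ j ∈ Finset.range n,
        ((1 : ℂ) - ((z : ℂ) * Complex.I) ^ 2 / ((j : ℂ) + 1) ^ 2)) * Complex.I⁻¹ =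
      (π : ℂ) * z * ∏ j ∈ Finset.range n, ((1 : ℂ) + (z : ℂ) ^ 2 / ((j : ℂ) + 1) ^ 2) := by
    intro n
    have hprod : (∏ j ∈ Finset.range n, ((1 : ℂ) - ((z : ℂ) * Complex.I) ^ 2 / ((j : ℂ) + 1) ^ 2))
        = ∏ j ∈ Finset.range n, ((1 : ℂ) + (z : ℂ) ^ 2 / ((j : ℂ) + 1) ^ 2) :=
      Finset.prod_congr rfl fun j _ => by rw [mul_pow, Complex.I_sq]; ring
    rw [hprod]
    have hI : Complex.I * Complex.I⁻¹ = 1 := mul_inv_cancel₀ Complex.I_ne_zero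
    linear_combination ((π : ℂ) * z * ∏ j ∈ Finset.range n,
      ((1 : ℂ) + (z : ℂ) ^ 2 / ((j : ℂ) + 1) ^ 2)) * hI
  have hlim : Complex.sin ((π : ℂ) * ((z : ℂ) * Complex.I)) * Complex.I⁻¹ =
      Complex.sinh ((π : ℂ) * z) := by
    rw [show (π : ℂ) * ((z : ℂ) * Complex.I) = ((π : ℂ) * z) * Complex.I by ring,
      Complex.sin_mul_I, mul_assoc, mul_inv_cancel₀ Complex.I_ne_zero, mul_one]
  have key : Tendsto (fun n : ℕ =>
      ((π : ℂ) * z * ∏ j ∈ Finset.range n, ((1 : ℂ) + (z : ℂ) ^ 2 / ((j : ℂ) + 1) ^ 2)))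
      atTop (𝓝 (Complex.sinh ((π : ℂ) * z))) := hlim ▸ h2.congr heq
  have hre : ∀ n : ℕ, π * z * ∏ j ∈ Finset.range n, ((1 : ℝ) + z ^ 2 / ((j : ℝ) + 1) ^ 2) =
      ((π : ℂ) * z * ∏ j ∈ Finset.range n, ((1 : ℂ) + (z : ℂ) ^ 2 / ((j : ℂ) + 1) ^ 2)).re := by
    intro n
    rw [show ((π : ℂ) * z * ∏ j ∈ Finset.range n, ((1 : ℂ) + (z : ℂ) ^ 2 / ((j : ℂ) + 1) ^ 2)) =
        (((π * z * ∏ j ∈ Finset.range n, ((1 : ℝ) + z ^ 2 / ((j : ℝ) + 1) ^ 2)) : ℝ) : ℂ) by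
      push_cast; ring, Complex.ofReal_re]
  have hsinh : Real.sinh (π * z) = (Complex.sinh ((π : ℂ) * z)).re := by
    rw [show ((π : ℂ) * z) = (((π * z : ℝ)) : ℂ) by push_cast; ring, ← Complex.ofReal_sinh,
      Complex.ofReal_re]
  rw [hsinh]
  exact ((Complex.continuous_re.tendsto _).comp key).congr fun n => (hre n).symm

theorem sinh_pi_z_series (z : ℝ) :
    (if z = 0 then (1 : ℝ) else Real.sinh (π * z) / (π * z)) =
      1 + z ^ 2 * ∑' n : ℕ,
        (∏ j ∈ Finset.Icc 1 n, ((j : ℝ) ^ 2 + z ^ 2)) / ((n + 1).factorial : ℝ) ^ 2 := by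
  by_cases hz : z = 0
  · simp [hz]
  · rw [if_neg hz]
    have hπz : π * z ≠ 0 := mul_ne_zero pi_ne_zero hz
    have hz2 : z ^ 2 ≠ 0 := pow_ne_zero 2 hz
    have h1 : Tendsto (fun n : ℕ => ∏ j ∈ Finset.range n, ((1 : ℝ) + z ^ 2 / ((j : ℝ) + 1) ^ 2))
        atTop (𝓝 (Real.sinh (π * z) / (π * z))) := by
      have := (euler_sinh z).div_const (π * z)
      refine this.congr (fun n => ?_)
      rw [mul_comm (π * z), mul_div_assoc, div_self hπz, mul_one]
    have h2 : Tendsto (fun n : ℕ => ∑ m ∈ Finset.range n, aSeq z m) atTop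
        (𝓝 ((Real.sinh (π * z) / (π * z) - 1) / z ^ 2)) := by
      have := (h1.sub_const 1).div_const (z ^ 2)
      refine this.congr (fun n => ?_)
      rw [prodAux_eq, partialAux_eq, add_sub_cancel_left, mul_div_cancel_left₀ _ hz2]
    have hnonneg : ∀ n, 0 ≤ aSeq z n := by
      intro n
      unfold aSeq
      positivity
    have hs : HasSum (aSeq z) ((Real.sinh (π * z) / (π * z) - 1) / z ^ 2) :=
      (hasSum_iff_tendsto_nat_of_nonneg hnonneg _).mpr h2
    have ht := hs.tsum_eq
    unfold aSeq at ht
    rw [ht]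
    field_simp
    ring
end

section
/- For every real z, cosh(πz) = 1 + 4z²·Σ_{n=0}^∞ (∏_{j=0}^{n-1} ((2j+1)² + 4z²)) / (∏_{j=0}^{n-1} (2j+3)²). -/
open Real

open Filter Topology Finset in
private lemma sinh_euler_prod (x : ℝ) :
    Filter.Tendsto (fun n : ℕ => π * x * ∏ j ∈ Finset.range n, (1 + x ^ 2 / ((j : ℝ) + 1) ^ 2))
      Filter.atTop (nhds (Real.sinh (π * x))) := by
  have h := Complex.tendsto_euler_sin_prod (x * Complex.I)
  have key : ∀ n : ℕ, π * (x * Complex.I) *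
      ∏ j ∈ Finset.range n, ((1 : ℂ) - (x * Complex.I) ^ 2 / ((j : ℂ) + 1) ^ 2)
      = ((π * x * ∏ j ∈ Finset.range n, (1 + x ^ 2 / ((j : ℝ) + 1) ^ 2) : ℝ) : ℂ) * Complex.I := by
    intro n
    push_cast
    rw [Finset.prod_congr rfl (fun j _ => ?_)]
    · ring
    · have : (x : ℂ) * Complex.I ^ 2 * Complex.I⁻¹ = -x * Complex.I⁻¹ := by
        rw [Complex.I_sq]; ring
      rw [show ((x:ℂ) * Complex.I) ^ 2 = -x ^ 2 by rw [mul_pow, Complex.I_sq]; ring]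
      ring
  rw [show Complex.sin (↑π * (↑x * Complex.I)) = ((Real.sinh (π * x) : ℝ) : ℂ) * Complex.I by
    rw [show (↑π * (↑x * Complex.I)) = ((π * x : ℝ) : ℂ) * Complex.I by push_cast; ring,
      Complex.sin_mul_I, Complex.ofReal_sinh]] at h
  have h2 := (Complex.continuous_im.tendsto _).comp h
  simp only [Function.comp_def] at h2
  rw [show (((Real.sinh (π * x) : ℝ) : ℂ) * Complex.I).im = Real.sinh (π * x) by
    rw [Complex.mul_I_im, Complex.ofReal_re]] at h2
  refine h2.congr (fun n => ?_)
  rw [key n, Complex.mul_I_im, Complex.ofReal_re]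

open Filter Topology Finset in
private lemma prod_split (z : ℝ) (n : ℕ) :
    ∏ j ∈ Finset.range (2 * n), (1 + 4 * z ^ 2 / ((j : ℝ) + 1) ^ 2)
      = (∏ j ∈ Finset.range n, (1 + z ^ 2 / ((j : ℝ) + 1) ^ 2)) *
        ∏ j ∈ Finset.range n, (1 + 4 * z ^ 2 / (2 * (j : ℝ) + 1) ^ 2) := by
  induction n with
  | zero => simp
  | succ n ih =>
    rw [show 2 * (n + 1) = 2 * n + 1 + 1 by ring, Finset.prod_range_succ, Finset.prod_range_succ,
      Finset.prod_range_succ, Finset.prod_range_succ, ih]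
    have h1 : ((n : ℝ) + 1) ≠ 0 := by positivity
    have h2 : (2 * (n : ℝ) + 1) ≠ 0 := by positivity
    push_cast
    field_simp
    ring

open Finset in
private lemma Q_eq (n : ℕ) :
    ∏ j ∈ Finset.range n, (2 * (j : ℝ) + 3) ^ 2
      = (∏ j ∈ Finset.range n, (2 * (j : ℝ) + 1) ^ 2) * (2 * (n : ℝ) + 1) ^ 2 := by
  induction n with
  | zero => simp
  | succ n ih =>
    rw [Finset.prod_range_succ, Finset.prod_range_succ, ih]
    push_cast
    ring

open Finset in
private lemma partial_sum_eq (z : ℝ) (n : ℕ) :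
    1 + 4 * z ^ 2 * ∑ k ∈ Finset.range n,
        (∏ j ∈ Finset.range k, ((2 * (j : ℝ) + 1) ^ 2 + 4 * z ^ 2)) /
          ∏ j ∈ Finset.range k, (2 * (j : ℝ) + 3) ^ 2
      = ∏ j ∈ Finset.range n, (1 + 4 * z ^ 2 / (2 * (j : ℝ) + 1) ^ 2) := by
  induction n with
  | zero => simp
  | succ n ih =>
    have hquot : ∏ j ∈ Finset.range n, (1 + 4 * z ^ 2 / (2 * (j : ℝ) + 1) ^ 2)
        = (∏ j ∈ Finset.range n, ((2 * (j : ℝ) + 1) ^ 2 + 4 * z ^ 2)) /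
          ∏ j ∈ Finset.range n, (2 * (j : ℝ) + 1) ^ 2 := by
      rw [← Finset.prod_div_distrib]
      refine Finset.prod_congr rfl (fun j _ => ?_)
      have : (2 * (j : ℝ) + 1) ^ 2 ≠ 0 := by positivity
      field_simp
    have hR : (0 : ℝ) < ∏ j ∈ Finset.range n, (2 * (j : ℝ) + 1) ^ 2 :=
      Finset.prod_pos (fun j _ => by positivity)
    have h1 : (2 * (n : ℝ) + 1) ^ 2 ≠ 0 := by positivity
    rw [Finset.sum_range_succ, Finset.prod_range_succ, mul_add, ← add_assoc, ih, hquot, Q_eq]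
    field_simp

open Filter Topology Finset in
theorem cosh_pi_z_series (z : ℝ) :
    Real.cosh (π * z) =
      1 + 4 * z ^ 2 * ∑' n : ℕ,
        (∏ j ∈ Finset.range n, ((2 * (j : ℝ) + 1) ^ 2 + 4 * z ^ 2)) /
          ∏ j ∈ Finset.range n, (2 * (j : ℝ) + 3) ^ 2 := by
  by_cases hz : z = 0
  · simp [hz]
  -- the partial products tend to cosh (π z)
  have hπz : π * z ≠ 0 := mul_ne_zero Real.pi_ne_zero hz
  have hsinh : Real.sinh (π * z) ≠ 0 := Real.sinh_ne_zero.mpr hπz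
  have hA := sinh_euler_prod z
  have hB := (sinh_euler_prod (2 * z)).comp
    (Filter.tendsto_id.const_mul_atTop' (zero_lt_two (α := ℕ)))
  have hAne : ∀ n : ℕ, π * z * ∏ j ∈ Finset.range n, (1 + z ^ 2 / ((j : ℝ) + 1) ^ 2) ≠ 0 := by
    intro n
    exact mul_ne_zero hπz (ne_of_gt (Finset.prod_pos (fun j _ => by positivity)))
  have hTend : Filter.Tendsto
      (fun n : ℕ => ∏ j ∈ Finset.range n, (1 + 4 * z ^ 2 / (2 * (j : ℝ) + 1) ^ 2))
      Filter.atTop (nhds (Real.cosh (π * z))) := by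
    have hdiv := hB.div (hA.const_mul 2)
      (by simpa using mul_ne_zero two_ne_zero hsinh)
    have hval : Real.sinh (π * (2 * z)) / (2 * Real.sinh (π * z)) = Real.cosh (π * z) := by
      rw [show π * (2 * z) = 2 * (π * z) by ring, Real.sinh_two_mul]
      field_simp
    rw [hval] at hdiv
    refine hdiv.congr (fun n => ?_)
    simp only [Pi.div_apply, Function.comp_apply, id_eq]
    rw [show ((2 : ℝ) * z) ^ 2 = 4 * z ^ 2 by ring, prod_split z n]
    rw [show π * (2 * z) * ((∏ j ∈ Finset.range n, (1 + z ^ 2 / ((j : ℝ) + 1) ^ 2)) *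
        ∏ j ∈ Finset.range n, (1 + 4 * z ^ 2 / (2 * (j : ℝ) + 1) ^ 2))
      = (2 * (π * z * ∏ j ∈ Finset.range n, (1 + z ^ 2 / ((j : ℝ) + 1) ^ 2))) *
        ∏ j ∈ Finset.range n, (1 + 4 * z ^ 2 / (2 * (j : ℝ) + 1) ^ 2) by ring]
    exact mul_div_cancel_left₀ _ (mul_ne_zero two_ne_zero (hAne n))
  -- convert to the sum
  have h4z : (4 : ℝ) * z ^ 2 ≠ 0 := by positivity
  set f : ℕ → ℝ := fun k =>
    (∏ j ∈ Finset.range k, ((2 * (j : ℝ) + 1) ^ 2 + 4 * z ^ 2)) /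
      ∏ j ∈ Finset.range k, (2 * (j : ℝ) + 3) ^ 2 with hf
  have hnonneg : ∀ k, 0 ≤ f k := by
    intro k
    apply div_nonneg
    · exact Finset.prod_nonneg (fun j _ => by positivity)
    · exact Finset.prod_nonneg (fun j _ => by positivity)
  have hS : Filter.Tendsto (fun n : ℕ => ∑ k ∈ Finset.range n, f k) Filter.atTop
      (nhds ((Real.cosh (π * z) - 1) / (4 * z ^ 2))) := by
    have := (hTend.sub_const 1).div_const (4 * z ^ 2)
    refine this.congr (fun n => ?_)
    rw [← partial_sum_eq z n]
    field_simp
    simp only [hf]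
    ring
  have hsum : HasSum f ((Real.cosh (π * z) - 1) / (4 * z ^ 2)) :=
    (hasSum_iff_tendsto_nat_of_nonneg hnonneg _).mpr hS
  rw [hsum.tsum_eq]
  field_simp
  ring
end

section
/- 28·ζ(3) - π³ = 64·Σ_{n=0}^∞ 1/(4n+3)³. -/
open Real

lemma bern3 : (Polynomial.aeval ((1:ℂ)/4)) (Polynomial.bernoulli 3) = 3/64 := by
  simp [Polynomial.bernoulli, Finset.sum_range_succ, bernoulli, bernoulli'_zero, bernoulli'_one,
    bernoulli'_two, bernoulli'_three]
  norm_num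

lemma sinZeta_quarter_three : HurwitzZeta.sinZeta (((1:ℝ)/4 : ℝ) : UnitAddCircle) 3 = (π : ℂ)^3 / 32 := by
  have h := HurwitzZeta.sinZeta_two_mul_nat_add_one (k := 1) (x := ((1:ℝ)/4)) one_ne_zero
    (by constructor <;> norm_num)
  norm_num at h ⊢
  rw [h, bern3]
  norm_num [Nat.factorial]
  ring

noncomputable def f : ℕ → ℂ := fun n => 1 / (n : ℂ) ^ 3

lemma hsumf : Summable f := by
  have := (Complex.summable_one_div_nat_cpow (p := 3)).mpr (by norm_num)
  refine this.congr fun n => ?_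
  rw [show ((3:ℂ)) = ((3:ℕ):ℂ) by norm_num, Complex.cpow_natCast]; rfl

lemma hZ : HasSum f (riemannZeta 3) := by
  have h := hsumf.hasSum
  rwa [show ∑' n, f n = riemannZeta 3 by
    rw [show f = fun n : ℕ => 1 / (n:ℂ)^3 from rfl,
      show ((3:ℂ)) = ((3:ℕ):ℂ) by norm_num, zeta_nat_eq_tsum_of_gt_one (by norm_num)]] at h

lemma hcomp (c d : ℕ) (hc : 0 < c) : Summable (fun n : ℕ => f (c * n + d)) := by
  apply hsumf.comp_injective
  intro a b h
  simp only at h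
  exact Nat.eq_of_mul_eq_mul_left hc (by omega)

theorem zeta3_pi_cubed_series :
    28 * riemannZeta 3 - (π : ℂ) ^ 3 =
      64 * ∑' n : ℕ, (1 : ℂ) / (4 * (n : ℂ) + 3) ^ 3 := by
  have hS1 : HasSum (fun n : ℕ => f (4 * n + 1)) (∑' n, f (4 * n + 1)) :=
    (hcomp 4 1 (by norm_num)).hasSum
  have hS3 : HasSum (fun n : ℕ => f (4 * n + 3)) (∑' n, f (4 * n + 3)) :=
    (hcomp 4 3 (by norm_num)).hasSum
  set s1 := ∑' n, f (4 * n + 1) with hs1d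
  set s3 := ∑' n, f (4 * n + 3) with hs3d
  -- even part of f
  have hEven : HasSum (fun n : ℕ => f (2 * n)) (riemannZeta 3 / 8) := by
    refine (hZ.div_const 8).congr_fun fun n => ?_
    simp only [f]
    push_cast
    rcases Nat.eq_zero_or_pos n with rfl | hn
    · simp
    · have h0 : (n : ℂ) ≠ 0 := Nat.cast_ne_zero.mpr hn.ne'
      field_simp
      ring
  -- odd part of f
  have hOdd : HasSum (fun n : ℕ => f (2 * n + 1)) (riemannZeta 3 - riemannZeta 3 / 8) := by
    have ho := (hcomp 2 1 (by norm_num)).hasSum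
    have h1 := hEven.even_add_odd ho
    have h2 := h1.unique hZ
    have h3 : (∑' n, f (2 * n + 1)) = riemannZeta 3 - riemannZeta 3 / 8 := by
      linear_combination h2
    rwa [h3] at ho
  -- split odds mod 4 : (2*(2m)+1 = 4m+1), (2*(2m+1)+1 = 4m+3)
  have hOdd' : HasSum (fun n : ℕ => f (2 * n + 1)) (s1 + s3) := by
    refine HasSum.even_add_odd ?_ ?_
    · exact hS1.congr_fun fun n => by norm_num [f]; ring_nf
    · exact hS3.congr_fun fun n => by norm_num [f]; ring_nf
  have key1 : s1 + s3 = riemannZeta 3 - riemannZeta 3 / 8 := hOdd'.unique hOdd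
  -- sinZeta series
  have hB : HasSum (fun n : ℕ => (Real.sin (2 * π * ((1:ℝ)/4) * n) : ℂ) / (n : ℂ) ^ (3:ℂ))
      ((π : ℂ)^3 / 32) := by
    have := HurwitzZeta.hasSum_nat_sinZeta ((1:ℝ)/4) (s := 3) (by norm_num)
    rwa [sinZeta_quarter_three] at this
  have hB' : HasSum (fun n : ℕ => (Real.sin (2 * π * ((1:ℝ)/4) * n) : ℂ) / (n : ℂ) ^ (3:ℂ))
      (0 + (s1 + -s3)) := by
    set F : ℕ → ℂ := fun n => (Real.sin (2 * π * ((1:ℝ)/4) * n) : ℂ) / (n : ℂ) ^ (3:ℂ) with hF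
    have he : HasSum (fun m : ℕ => F (2 * m)) 0 := by
      refine hasSum_zero.congr_fun fun n => ?_
      have h1 : 2 * π * ((1:ℝ)/4) * ((2*n : ℕ) : ℝ) = (n : ℝ) * π := by push_cast; ring
      rw [hF]
      simp only
      rw [h1, Real.sin_nat_mul_pi]
      simp
    have hval : ∀ m : ℕ, Real.sin (2 * π * ((1:ℝ)/4) * ((2*m+1 : ℕ) : ℝ)) = (-1)^m := by
      intro m
      have h1 : 2 * π * ((1:ℝ)/4) * ((2*m+1 : ℕ) : ℝ) = π/2 + (m : ℝ) * π := by push_cast; ring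
      rw [h1, Real.sin_add_nat_mul_pi, Real.sin_pi_div_two, mul_one]
    have ho : HasSum (fun m : ℕ => F (2 * m + 1)) (s1 + -s3) := by
      have cast3 : ∀ k : ℕ, ((k:ℂ)) ^ (3:ℂ) = ((k:ℂ)) ^ (3:ℕ) := fun k => by
        rw [show ((3:ℂ)) = ((3:ℕ):ℂ) by norm_num, Complex.cpow_natCast]
      have he2 : HasSum (fun j : ℕ => F (2 * (2 * j) + 1)) s1 := by
        refine hS1.congr_fun fun j => ?_
        have h1 : 2 * π * ((1:ℝ)/4) * ((2*(2*j)+1 : ℕ) : ℝ) = π/2 + ((2*j : ℕ) : ℝ) * π := by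
          push_cast; ring
        rw [hF]; simp only
        rw [h1, Real.sin_add_nat_mul_pi, Real.sin_pi_div_two, mul_one, cast3]
        simp only [f]
        push_cast
        rw [pow_mul]
        norm_num
        ring_nf
      have ho2 : HasSum (fun j : ℕ => F (2 * (2 * j + 1) + 1)) (-s3) := by
        refine hS3.neg.congr_fun fun j => ?_
        have h1 : 2 * π * ((1:ℝ)/4) * ((2*(2*j+1)+1 : ℕ) : ℝ) = π/2 + ((2*j+1 : ℕ) : ℝ) * π := by
          push_cast; ring
        rw [hF]; simp only
        rw [h1, Real.sin_add_nat_mul_pi, Real.sin_pi_div_two, mul_one, cast3]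
        simp only [f]
        push_cast
        rw [pow_succ, pow_mul]
        norm_num
        ring_nf
      exact HasSum.even_add_odd (f := fun m => F (2 * m + 1)) he2 ho2
    exact HasSum.even_add_odd (f := F) he ho
  have key2 : (0 : ℂ) + (s1 + -s3) = (π : ℂ)^3 / 32 := hB'.unique hB
  have hgoal : ∑' n : ℕ, (1 : ℂ) / (4 * (n : ℂ) + 3) ^ 3 = s3 := by
    rw [hs3d]
    refine tsum_congr fun n => ?_
    simp only [f]
    push_cast
    ring_nf
  rw [hgoal]
  linear_combination 32 * key2 - 32 * key1
end

section
/- ζ(5) + 3·ζ(3) = 9/2 + Σ_{n=0}^∞ 1 / ((3n²+3n+1)·(3n²+9n+7)·(n+1)⁵). -/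
open Complex

private lemma aux_ne (n : ℕ) : (3 * (n : ℂ) ^ 2 + 3 * (n : ℂ) + 1) ≠ 0 := by
  have h : (3 * (n : ℂ) ^ 2 + 3 * (n : ℂ) + 1) = ((3 * n ^ 2 + 3 * n + 1 : ℕ) : ℂ) := by
    push_cast; ring
  rw [h]
  exact Nat.cast_ne_zero.mpr (by positivity)

private lemma aux_ne' (n : ℕ) : (3 * (n : ℂ) ^ 2 + 9 * (n : ℂ) + 7) ≠ 0 := by
  have h : (3 * (n : ℂ) ^ 2 + 9 * (n : ℂ) + 7) = ((3 * n ^ 2 + 9 * n + 7 : ℕ) : ℂ) := by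
    push_cast; ring
  rw [h]
  exact Nat.cast_ne_zero.mpr (by positivity)

private lemma aux_ne'' (n : ℕ) : ((n : ℂ) + 1) ≠ 0 := by
  have h : ((n : ℂ) + 1) = ((n + 1 : ℕ) : ℂ) := by push_cast; ring
  rw [h]
  exact Nat.cast_ne_zero.mpr (Nat.succ_ne_zero n)

private lemma aux_summ0 (k : ℕ) (hk : 1 < k) :
    Summable (fun n : ℕ => 1 / (n : ℂ) ^ k) := by
  apply Summable.of_norm
  have h : (fun n : ℕ => ‖1 / (n : ℂ) ^ k‖) = fun n : ℕ => 1 / (n : ℝ) ^ k := by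
    funext n
    rw [norm_div, norm_pow, norm_one, Complex.norm_natCast]
  rw [h]
  exact (Real.summable_one_div_nat_pow (p := k)).mpr hk

private lemma aux_summ (k : ℕ) (hk : 1 < k) :
    Summable (fun n : ℕ => 1 / ((n : ℂ) + 1) ^ k) := by
  have h2 := (summable_nat_add_iff (f := fun n : ℕ => 1 / (n : ℂ) ^ k) 1).mpr (aux_summ0 k hk)
  refine h2.congr fun n => ?_
  push_cast
  ring_nf

private noncomputable def gfun (n : ℕ) : ℂ := -9 / (2 * (3 * (n : ℂ) ^ 2 + 3 * (n : ℂ) + 1))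

private lemma gfun_summable : Summable gfun := by
  apply Summable.of_norm
  have key : ∀ n : ℕ, ‖gfun n‖ ≤ (9/2) * (1 / ((n : ℝ) + 1) ^ 2) := by
    intro n
    unfold gfun
    have h1 : (3 * (n : ℂ) ^ 2 + 3 * (n : ℂ) + 1) = ((3 * n ^ 2 + 3 * n + 1 : ℕ) : ℂ) := by
      push_cast; ring
    rw [norm_div, norm_neg, norm_mul, h1, Complex.norm_natCast]
    have h9 : ‖(9 : ℂ)‖ = 9 := by
      rw [show (9 : ℂ) = ((9 : ℕ) : ℂ) by norm_num, Complex.norm_natCast]; norm_num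
    have h2 : ‖(2 : ℂ)‖ = 2 := by
      rw [show (2 : ℂ) = ((2 : ℕ) : ℂ) by norm_num, Complex.norm_natCast]; norm_num
    rw [h9, h2]
    have hle : ((n : ℝ) + 1) ^ 2 ≤ ((3 * n ^ 2 + 3 * n + 1 : ℕ) : ℝ) := by
      push_cast; nlinarith [sq_nonneg ((n : ℝ))]
    have hpos : (0 : ℝ) < ((n : ℝ) + 1) ^ 2 := by positivity
    rw [div_le_iff₀ (by positivity)]
    have : (9 : ℝ) / 2 * (1 / ((n : ℝ) + 1) ^ 2) * (2 * ((3 * n ^ 2 + 3 * n + 1 : ℕ) : ℝ))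
        = 9 * (((3 * n ^ 2 + 3 * n + 1 : ℕ) : ℝ) / ((n : ℝ) + 1) ^ 2) := by ring
    rw [this]
    have h1' : (1 : ℝ) ≤ ((3 * n ^ 2 + 3 * n + 1 : ℕ) : ℝ) / ((n : ℝ) + 1) ^ 2 := by
      rw [le_div_iff₀ hpos]; linarith
    linarith
  apply Summable.of_nonneg_of_le (fun n => norm_nonneg _) key
  have h : Summable (fun n : ℕ => 1 / ((n : ℝ) + 1) ^ 2) := by
    have h0 := (Real.summable_one_div_nat_pow (p := 2)).mpr one_lt_two
    have h2 := (summable_nat_add_iff (f := fun n : ℕ => 1 / (n : ℝ) ^ 2) 1).mpr h0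
    refine h2.congr fun n => ?_
    push_cast; ring_nf
  exact h.mul_left _

theorem zeta5_add_three_zeta3_series :
    riemannZeta 5 + 3 * riemannZeta 3 =
      9 / 2 + ∑' n : ℕ, (1 : ℂ) /
        ((3 * (n : ℂ) ^ 2 + 3 * (n : ℂ) + 1) * (3 * (n : ℂ) ^ 2 + 9 * (n : ℂ) + 7) *
          ((n : ℂ) + 1) ^ 5) := by
  have hz : ∀ k : ℕ, 1 < k → riemannZeta k = ∑' n : ℕ, 1 / ((n : ℂ) + 1) ^ k := by
    intro k hk
    rw [zeta_nat_eq_tsum_of_gt_one hk, Summable.tsum_eq_zero_add (aux_summ0 k hk)]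
    have h0 : (1 : ℂ) / ((0 : ℕ) : ℂ) ^ k = 0 := by
      rw [Nat.cast_zero, zero_pow (by omega), div_zero]
    rw [h0, zero_add]
    exact tsum_congr fun n => by push_cast; ring_nf
  have hz5 : riemannZeta 5 = ∑' n : ℕ, 1 / ((n : ℂ) + 1) ^ 5 := by
    have := hz 5 (by norm_num); exact_mod_cast this
  have hz3 : riemannZeta 3 = ∑' n : ℕ, 1 / ((n : ℂ) + 1) ^ 3 := by
    have := hz 3 (by norm_num); exact_mod_cast this
  have hs5 := aux_summ 5 (by norm_num)
  have hs3 := aux_summ 3 (by norm_num)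
  have hgs := gfun_summable
  have hgs' : Summable (fun n => gfun (n + 1)) := (summable_nat_add_iff 1).mpr hgs
  have hterm : ∀ n : ℕ,
      (1 : ℂ) / ((3 * (n : ℂ) ^ 2 + 3 * (n : ℂ) + 1) * (3 * (n : ℂ) ^ 2 + 9 * (n : ℂ) + 7) *
          ((n : ℂ) + 1) ^ 5)
        = 1 / ((n : ℂ) + 1) ^ 5 + 3 * (1 / ((n : ℂ) + 1) ^ 3) + (gfun n - gfun (n + 1)) := by
    intro n
    have hA := aux_ne n
    have hB := aux_ne' n
    have hC := aux_ne'' n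
    have hD : 3 * ((n : ℂ) + 1) ^ 2 + 3 * ((n : ℂ) + 1) + 1 ≠ 0 := fun h =>
      hB (by linear_combination h)
    unfold gfun
    push_cast
    field_simp
    have hA2 : 3 * (n : ℂ) * ((n : ℂ) + 1) + 1 ≠ 0 := fun h => hA (by linear_combination h)
    have hD2 : 3 * ((n : ℂ) + 1) * ((n : ℂ) + 1 + 1) + 1 ≠ 0 := fun h => hD (by linear_combination h)
    have hB2 : (n : ℂ) * (3 * (n : ℂ) + 9) + 7 ≠ 0 := fun h => hB (by linear_combination h)
    field_simp
    ring
  rw [tsum_congr hterm]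
  have hsum3' : Summable (fun n : ℕ => 3 * (1 / ((n : ℂ) + 1) ^ 3)) := hs3.mul_left 3
  have hgd : Summable (fun n : ℕ => gfun n - gfun (n + 1)) := hgs.sub hgs'
  rw [Summable.tsum_add (hs5.add hsum3') hgd, Summable.tsum_add hs5 hsum3', tsum_mul_left,
    Summable.tsum_sub hgs hgs', ← hz5, ← hz3]
  have htel : (∑' n : ℕ, gfun n) - (∑' n : ℕ, gfun (n + 1)) = gfun 0 := by
    rw [Summable.tsum_eq_zero_add hgs]; ring
  rw [htel]
  have hg0 : gfun 0 = -(9 / 2) := by unfold gfun; norm_num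
  rw [hg0]; ring
end

section
/- 3·ζ(3) + 16·log 2 = 16 - 4·Σ_{n=0}^∞ (-1)^n / ((2n+1)·(2n+3)·(n+1)³). -/
open Filter Topology Finset

private noncomputable def pz (n : ℕ) : ℝ := 1 / ((n:ℝ)+1)^3
private noncomputable def hA (n : ℕ) : ℝ := (-1:ℝ)^n / ((n:ℝ)+1)^3
private noncomputable def gA (n : ℕ) : ℝ := (-1:ℝ)^n * 4 / (((n:ℝ)+1)*(2*(n:ℝ)+1)*(2*(n:ℝ)+3))
private noncomputable def rA (n : ℕ) : ℝ :=
    (-1:ℝ)^n / ((2*(n:ℝ)+1)*(2*(n:ℝ)+3)*((n:ℝ)+1)^3)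

private lemma hpz : Summable pz := by
  have := (Real.summable_one_div_nat_pow (p := 3)).mpr (by norm_num)
  have := (summable_nat_add_iff 1).mpr this
  refine this.congr fun n => ?_
  unfold pz
  push_cast
  ring

private lemma den1 (n : ℕ) : ((n:ℝ)+1) ≠ 0 := by positivity
private lemma den2 (n : ℕ) : (2*(n:ℝ)+1) ≠ 0 := by positivity
private lemma den3 (n : ℕ) : (2*(n:ℝ)+3) ≠ 0 := by positivity

private lemma hhA : Summable hA := by
  refine Summable.of_norm_bounded hpz fun n => ?_
  unfold hA pz
  rw [norm_div, norm_pow, norm_neg, norm_one, one_pow, one_div]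
  rw [Real.norm_eq_abs, abs_of_nonneg (by positivity), one_div]

private lemma hgA : Summable gA := by
  refine Summable.of_norm_bounded (g := fun n => 4 * pz n) (hpz.mul_left 4) fun n => ?_
  unfold gA pz
  rw [norm_div, norm_mul, norm_pow, norm_neg, norm_one, one_pow, one_mul]
  have h1 : ((n:ℝ)+1) ≤ 2*(n:ℝ)+1 := by linarith [Nat.cast_nonneg (α := ℝ) n]
  have h2 : ((n:ℝ)+1) ≤ 2*(n:ℝ)+3 := by linarith [Nat.cast_nonneg (α := ℝ) n]
  have hn : (0:ℝ) < (n:ℝ)+1 := by positivity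
  rw [Real.norm_eq_abs, Real.norm_eq_abs, abs_of_nonneg (by positivity),
    abs_of_nonneg (by positivity)]
  rw [div_le_iff₀ (by positivity)]
  have : ((n:ℝ)+1)^3 ≤ ((n:ℝ)+1)*((2*(n:ℝ)+1)*(2*(n:ℝ)+3)) := by
    nlinarith [Nat.cast_nonneg (α := ℝ) n, sq_nonneg ((n:ℝ)), sq_nonneg ((n:ℝ)+1)]
  calc (4:ℝ) = (4 * (1/((n:ℝ)+1)^3)) * ((n:ℝ)+1)^3 := by field_simp
    _ ≤ (4 * (1/((n:ℝ)+1)^3)) * (((n:ℝ)+1)*((2*(n:ℝ)+1)*(2*(n:ℝ)+3))) := by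
        refine mul_le_mul_of_nonneg_left this (by positivity)
    _ = 4 * (1/((n:ℝ)+1)^3) * (((n:ℝ)+1)*(2*(n:ℝ)+1)*(2*(n:ℝ)+3)) := by ring

private lemma rA_eq (n : ℕ) : rA n = gA n - hA n := by
  unfold rA gA hA
  have h1 := den1 n; have h2 := den2 n; have h3 := den3 n
  field_simp
  ring

private lemma hrA : Summable rA := (hgA.sub hhA).congr (fun n => (rA_eq n).symm)

-- ∑ hA = (3/4) * ∑ pz
private lemma tsum_hA : ∑' n, hA n = 3/4 * ∑' n, pz n := by
  have hpe : Summable (fun k => pz (2*k)) := hpz.comp_injective fun a b => by omega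
  have hpo : Summable (fun k => pz (2*k+1)) := hpz.comp_injective fun a b => by omega
  have hhe : Summable (fun k => hA (2*k)) := hhA.comp_injective fun a b => by omega
  have hho : Summable (fun k => hA (2*k+1)) := hhA.comp_injective fun a b => by omega
  have e1 : ∑' k, hA (2*k) + ∑' k, hA (2*k+1) = ∑' k, hA k := tsum_even_add_odd hhe hho
  have e2 : ∑' k, pz (2*k) + ∑' k, pz (2*k+1) = ∑' k, pz k := tsum_even_add_odd hpe hpo
  have he : (∑' k, hA (2*k)) = ∑' k, pz (2*k) := by
    refine tsum_congr fun k => ?_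
    unfold hA pz
    rw [pow_mul]
    norm_num
  have ho : (∑' k, hA (2*k+1)) = -∑' k, pz (2*k+1) := by
    rw [← tsum_neg]
    refine tsum_congr fun k => ?_
    unfold hA pz
    rw [pow_succ, pow_mul]
    push_cast
    norm_num [neg_div]
  have hq : (∑' k, pz (2*k+1)) = 1/8 * ∑' k, pz k := by
    rw [← tsum_mul_left]
    refine tsum_congr fun k => ?_
    unfold pz
    push_cast
    have d : ((k:ℝ)+1) ≠ 0 := by positivity
    field_simp
    ring
  have := e1
  rw [he, ho, hq] at this
  have he2 : (∑' k, pz (2*k)) = ∑' k, pz k - 1/8 * ∑' k, pz k := by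
    rw [← hq]; linarith [e2]
  rw [he2] at this
  linarith [this]

-- partial sums of gA
private noncomputable def tt (n : ℕ) : ℝ := 4 * (-1:ℝ)^n / (2*(n:ℝ)+1)

private lemma gA_split (n : ℕ) :
    gA n = (-4) * ((-1:ℝ)^n / ((n:ℝ)+1)) + (tt n - tt (n+1)) := by
  unfold gA tt
  have h1 := den1 n; have h2 := den2 n; have h3 := den3 n
  have h4 : (2*((n:ℝ)+1)+1) = 2*(n:ℝ)+3 := by ring
  rw [pow_succ]
  push_cast
  rw [h4]
  field_simp
  ring

private lemma gA_partial (N : ℕ) :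
    ∑ n ∈ range N, gA n =
      (-4) * ∑ n ∈ range N, ((-1:ℝ)^n / ((n:ℝ)+1)) + (4 - 4*(-1:ℝ)^N/(2*(N:ℝ)+1)) := by
  have : ∑ n ∈ range N, gA n =
      ∑ n ∈ range N, ((-4) * ((-1:ℝ)^n / ((n:ℝ)+1))) + ∑ n ∈ range N, (tt n - tt (n+1)) := by
    rw [← Finset.sum_add_distrib]
    exact Finset.sum_congr rfl fun n _ => gA_split n
  rw [this, Finset.sum_range_sub', ← Finset.mul_sum]
  unfold tt
  norm_num

-- alternating harmonic partial sums at even indices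
private lemma alt_harmonic_even (N : ℕ) :
    ∑ n ∈ range (2*N), ((-1:ℝ)^n / ((n:ℝ)+1)) = (harmonic (2*N) : ℝ) - (harmonic N : ℝ) := by
  induction N with
  | zero => simp
  | succ N ih =>
    have h2 : 2*(N+1) = (2*N) + 1 + 1 := by ring
    rw [h2, Finset.sum_range_succ, Finset.sum_range_succ, ih]
    rw [harmonic_succ N, show (2*N)+1+1 = 2*N+2 by ring]
    rw [show harmonic (2*N+2) = harmonic (2*N+1) + (↑(2*N+1+1):ℚ)⁻¹ from harmonic_succ _,
      harmonic_succ (2*N)]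
    have e1 : (-1:ℝ)^(2*N) = 1 := by rw [pow_mul]; norm_num
    have e2 : (-1:ℝ)^(2*N+1) = -1 := by rw [pow_succ, e1]; norm_num
    rw [e1, e2]
    push_cast
    have d1 : (2*(N:ℝ)+1) ≠ 0 := by positivity
    have d2 : (2*(N:ℝ)+1+1) ≠ 0 := by positivity
    have d3 : ((N:ℝ)+1) ≠ 0 := by positivity
    field_simp
    ring

private lemma tendsto_alt_harmonic :
    Tendsto (fun N : ℕ => ((harmonic (2*N) : ℝ) - (harmonic N : ℝ))) atTop (𝓝 (Real.log 2)) := by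
  have h1 := Real.tendsto_harmonic_sub_log
  have h2 : Tendsto (fun n : ℕ => 2*n) atTop atTop :=
    tendsto_atTop_atTop_of_monotone (fun a b h => by omega) (fun b => ⟨b, by omega⟩)
  have h3 := h1.comp h2
  have key := (h3.sub h1).add_const (Real.log 2)
  rw [sub_self, zero_add] at key
  refine key.congr' ?_
  filter_upwards [eventually_gt_atTop 0] with N hN
  have hN' : (N:ℝ) ≠ 0 := Nat.cast_ne_zero.mpr hN.ne'
  have : Real.log (2*(N:ℕ) : ℕ) = Real.log 2 + Real.log N := by
    push_cast
    rw [Real.log_mul two_ne_zero hN']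
  simp only [Function.comp_apply]
  push_cast
  rw [Real.log_mul two_ne_zero hN']
  ring

private lemma tsum_gA : ∑' n, gA n = 4 - 4 * Real.log 2 := by
  have hsum := hgA.hasSum.tendsto_sum_nat
  have h2 : Tendsto (fun n : ℕ => 2*n) atTop atTop :=
    tendsto_atTop_atTop_of_monotone (fun a b h => by omega) (fun b => ⟨b, by omega⟩)
  have heven := hsum.comp h2
  have key : Tendsto (fun N : ℕ => ∑ n ∈ range (2*N), gA n) atTop (𝓝 (4 - 4*Real.log 2)) := by
    have e : ∀ N : ℕ, ∑ n ∈ range (2*N), gA n =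
        (-4) * ((harmonic (2*N) : ℝ) - (harmonic N : ℝ)) + (4 - 4/(2*(2*N:ℕ)+1)) := by
      intro N
      rw [gA_partial, alt_harmonic_even]
      have e1 : (-1:ℝ)^(2*N) = 1 := by rw [pow_mul]; norm_num
      rw [e1]
      push_cast
      ring
    have t1 : Tendsto (fun N : ℕ =>
        (-4) * ((harmonic (2*N) : ℝ) - (harmonic N : ℝ)) + (4 - 4/(2*(2*N:ℕ)+1)))
        atTop (𝓝 ((-4) * Real.log 2 + (4 - 0))) := by
      refine Tendsto.add (tendsto_alt_harmonic.const_mul _) (tendsto_const_nhds.sub ?_)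
      have hmono : Tendsto (fun N : ℕ => 4*N+1) atTop atTop :=
        tendsto_atTop_atTop_of_monotone (fun a b h => by omega) (fun b => ⟨b, by omega⟩)
      have : Tendsto (fun N : ℕ => (2*(2*N:ℕ)+1 : ℝ)) atTop atTop := by
        refine (tendsto_natCast_atTop_atTop.comp hmono).congr fun N => ?_
        simp only [Function.comp_apply]
        push_cast
        ring
      simpa using Tendsto.div_atTop (tendsto_const_nhds (x := (4:ℝ))) this
    have : ((-4) * Real.log 2 + (4 - 0) : ℝ) = 4 - 4*Real.log 2 := by ring
    rw [this] at t1
    exact t1.congr fun N => (e N).symm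
  exact tendsto_nhds_unique (heven.congr fun N => rfl) key

private lemma tsum_rA : ∑' n, rA n = 4 - 4 * Real.log 2 - 3/4 * ∑' n, pz n := by
  have : ∑' n, rA n = ∑' n, (gA n - hA n) := tsum_congr rA_eq
  rw [this, Summable.tsum_sub hgA hhA, tsum_gA, tsum_hA]

theorem three_zeta3_add_sixteen_log_two_series :
    3 * riemannZeta 3 + 16 * (Real.log 2 : ℂ) =
      16 - 4 * ∑' n : ℕ, (-1 : ℂ) ^ n /
        ((2 * (n : ℂ) + 1) * (2 * (n : ℂ) + 3) * ((n : ℂ) + 1) ^ 3) := by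
  have hzeta : riemannZeta 3 = ((∑' n, pz n : ℝ) : ℂ) := by
    rw [zeta_eq_tsum_one_div_nat_add_one_cpow (by norm_num), Complex.ofReal_tsum]
    refine tsum_congr fun n => ?_
    rw [show (3:ℂ) = ((3:ℕ):ℂ) by norm_num, Complex.cpow_natCast]
    unfold pz
    push_cast
    ring
  have hts : (∑' n : ℕ, (-1 : ℂ) ^ n /
      ((2 * (n : ℂ) + 1) * (2 * (n : ℂ) + 3) * ((n : ℂ) + 1) ^ 3)) = ((∑' n, rA n : ℝ) : ℂ) := by
    rw [Complex.ofReal_tsum]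
    refine tsum_congr fun n => ?_
    unfold rA
    push_cast
    ring
  rw [hzeta, hts, tsum_rA]
  push_cast
  ring
end
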